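/- arXiv:1402.0060 — 2 statements merged into one kernel-verified Lean document; each statement's English description precedes it below -/
import Mathlib

section
/- For every prime power q ≥ 9 and every index i with 4 ≤ i ≤ 8, the minimum distance of the toric code C_{P_6^(i)} over 𝔽_q equals (q-1)² − 3(q-1). -/
/-- Embed a lattice point of `ℤ²` into the real plane. -/
def toRealPt (p : ℤ × ℤ) : ℝ × ℝ := ((p.1 : ℝ), (p.2 : ℝ))

/-- The lattice points of the (possibly degenerate) convex lattice polygon spanned by a
finite set `V` of points of `ℤ²`, i.e. the points of `ℤ²` lying in the convex hull of `V`. -/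
def latticePts (V : Finset (ℤ × ℤ)) : Set (ℤ × ℤ) :=
  {p | toRealPt p ∈ convexHull ℝ (toRealPt '' (V : Set (ℤ × ℤ)))}

/-- The integer affine map `T(x) = Mx + v` on `ℤ²`. -/
def affMap (M : Matrix (Fin 2) (Fin 2) ℤ) (v : ℤ × ℤ) (p : ℤ × ℤ) : ℤ × ℤ :=
  (M 0 0 * p.1 + M 0 1 * p.2 + v.1, M 1 0 * p.1 + M 1 1 * p.2 + v.2)

/-- Two subsets of `ℤ²` are lattice equivalent if some affine map `T(x) = Mx + v`,
with `M ∈ GL(2,ℤ)` and `v ∈ ℤ²`, maps the first bijectively onto the second. -/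
def LatticeEquiv (S S' : Set (ℤ × ℤ)) : Prop :=
  ∃ (M : Matrix (Fin 2) (Fin 2) ℤ) (v : ℤ × ℤ),
    IsUnit M.det ∧ Set.BijOn (affMap M v) S S'

/-- Evaluation of the Laurent monomial `x^{m₁} y^{m₂}` at a point of the torus `(F*)²`. -/
def evalMonomial {F : Type*} [Field F] (m : ℤ × ℤ) (t : Fˣ × Fˣ) : F :=
  ((t.1 ^ m.1 : Fˣ) : F) * ((t.2 ^ m.2 : Fˣ) : F)

/-- The toric code over `F` associated to a set `S ⊆ ℤ²` of exponent vectors: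
the span of the evaluation vectors of the monomials `x^{m₁} y^{m₂}`, `m ∈ S`. -/
def toricCode (F : Type*) [Field F] (S : Set (ℤ × ℤ)) :
    Submodule F ((Fˣ × Fˣ) → F) :=
  Submodule.span F ((fun m => evalMonomial m) '' S)

/-- The Hamming weight of a word: the number of nonzero coordinates. -/
noncomputable def hammingWt {X F : Type*} [Zero F] (c : X → F) : ℕ :=
  Set.ncard {x | c x ≠ 0}

/-- The minimum distance of a linear code: the least Hamming weight of a nonzero codeword. -/
noncomputable def minDist {F X : Type*} [Field F] (C : Submodule F (X → F)) : ℕ :=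
  sInf {w | ∃ c ∈ C, c ≠ 0 ∧ hammingWt c = w}

/-- Monomial equivalence of linear codes inside `F^X`. -/
def MonomiallyEquiv {F X : Type*} [Field F] (C₁ C₂ : Submodule F (X → F)) : Prop :=
  ∃ (π : Equiv.Perm X) (d : X → Fˣ),
    (C₂ : Set (X → F)) = (fun c x => (d x : F) * c (π x)) '' (C₁ : Set (X → F))

/-- The vertex sets of the fourteen polygons `P₆⁽ⁱ⁾`, `i = 1, …, 14`. -/
def P6 : ℕ → Finset (ℤ × ℤ)
  | 1 => {(0,0),(5,0)}
  | 2 => {(0,0),(4,0),(0,1)}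
  | 3 => {(0,0),(3,0),(1,1),(0,1)}
  | 4 => {(0,-1),(3,0),(0,1)}
  | 5 => {(-1,-1),(3,0),(0,1)}
  | 6 => {(0,0),(1,0),(3,3),(0,1)}
  | 7 => {(0,0),(0,1),(3,0),(3,-1)}
  | 8 => {(-1,0),(0,1),(2,0),(0,-1)}
  | 9 => {(0,-1),(2,0),(1,1),(0,1)}
  | 10 => {(0,-1),(2,0),(-1,2)}
  | 11 => {(-1,-1),(1,0),(1,1),(0,2)}
  | 12 => {(-1,0),(0,-1),(1,0),(1,1),(0,1)}
  | 13 => {(0,0),(2,0),(0,2)}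
  | 14 => {(0,0),(2,0),(2,1),(0,1)}
  | _ => ∅



open Polynomial Finset in
open scoped Classical in
/-- Units that are roots of a nonzero polynomial of degree at most `k` number at most `k`. -/
lemma units_root_card_le {F : Type} [Field F] [Fintype F] (P : Polynomial F) (hP : P ≠ 0)
    (k : ℕ) (hd : P.natDegree ≤ k) :
    (Finset.univ.filter fun s : Fˣ => P.eval ↑s = 0).card ≤ k := by
  have h := Finset.card_le_card_of_injOn (fun s : Fˣ => (s : F))
    (s := Finset.univ.filter fun s : Fˣ => P.eval ↑s = 0) (t := P.roots.toFinset)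
    (by
      intro s hs
      simp only [Finset.mem_coe, Finset.mem_filter] at hs
      simp [Multiset.mem_toFinset, Polynomial.mem_roots hP, Polynomial.IsRoot, hs.2])
    (by intro a _ b _ hab; exact Units.ext hab)
  refine h.trans ?_
  exact (P.roots.toFinset_card_le).trans ((Polynomial.card_roots' P).trans hd)

open scoped Classical in
lemma card_zeros_fiber {F : Type} [Field F] [Fintype F] (g : Fˣ × Fˣ → F) :
    (Finset.univ.filter fun p : Fˣ × Fˣ => g p = 0).card
      = ∑ t : Fˣ, (Finset.univ.filter fun s : Fˣ => g (t, s) = 0).card := by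
  rw [Finset.card_eq_sum_card_fiberwise (f := Prod.fst) (t := Finset.univ)
    (fun x _ => Finset.mem_univ _)]
  refine Finset.sum_congr rfl fun t _ => ?_
  refine Finset.card_bij (fun p _ => p.2) ?_ ?_ ?_
  · rintro ⟨p1, p2⟩ hp
    simp only [Finset.mem_filter, Finset.mem_univ, true_and] at hp ⊢
    obtain ⟨h1, h2⟩ := hp
    subst h2
    exact h1
  · intro p hp p' hp' h2
    simp only [Finset.mem_filter, Finset.mem_univ, true_and] at hp hp'
    exact Prod.ext (hp.2.trans hp'.2.symm) h2
  · intro s hs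
    simp only [Finset.mem_filter, Finset.mem_univ, true_and] at hs ⊢
    exact ⟨(t, s), ⟨hs, rfl⟩, rfl⟩

open scoped Classical in
lemma zeros_bound {F : Type} [Field F] [Fintype F] (g : Fˣ × Fˣ → F) (T : Finset Fˣ) (k : ℕ)
    (h : ∀ t ∉ T, (Finset.univ.filter fun s : Fˣ => g (t, s) = 0).card ≤ k) :
    (Finset.univ.filter fun p : Fˣ × Fˣ => g p = 0).card
      ≤ (T.card + k) * Fintype.card Fˣ := by
  rw [card_zeros_fiber]
  have hsplit : ∑ t : Fˣ, (Finset.univ.filter fun s : Fˣ => g (t, s) = 0).card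
      = ∑ t ∈ Finset.univ \ T, (Finset.univ.filter fun s : Fˣ => g (t, s) = 0).card
        + ∑ t ∈ T, (Finset.univ.filter fun s : Fˣ => g (t, s) = 0).card :=
    (Finset.sum_sdiff (Finset.subset_univ T)).symm
  have h1 : ∑ t ∈ T, (Finset.univ.filter fun s : Fˣ => g (t, s) = 0).card
      ≤ T.card * Fintype.card Fˣ := by
    refine (Finset.sum_le_card_nsmul _ _ (Fintype.card Fˣ) ?_).trans
      (le_of_eq (by simp [mul_comm]))
    intro t _
    simpa using (Finset.card_filter_le Finset.univ fun s : Fˣ => g (t, s) = 0)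
  have h2 : ∑ t ∈ Finset.univ \ T, (Finset.univ.filter fun s : Fˣ => g (t, s) = 0).card
      ≤ k * Fintype.card Fˣ := by
    refine (Finset.sum_le_card_nsmul _ _ k ?_).trans ?_
    · intro t ht
      exact h t (by simpa using (Finset.mem_sdiff.mp ht).2)
    · simp only [smul_eq_mul]
      have hc : (Finset.univ \ T).card ≤ Fintype.card Fˣ := by
        simpa using Finset.card_le_card (Finset.subset_univ (Finset.univ \ T))
      calc (Finset.univ \ T).card * k ≤ Fintype.card Fˣ * k := Nat.mul_le_mul_right _ hc
        _ = k * Fintype.card Fˣ := Nat.mul_comm _ _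
  rw [hsplit, Nat.add_mul]
  exact le_of_le_of_eq (Nat.add_le_add h2 h1) (Nat.add_comm _ _)

open scoped Classical in
lemma hammingWt_eq {F : Type} [Field F] [Fintype F] (c : Fˣ × Fˣ → F) :
    hammingWt c = Fintype.card Fˣ * Fintype.card Fˣ
      - (Finset.univ.filter fun p : Fˣ × Fˣ => c p = 0).card := by
  have h1 : {x | c x ≠ 0} = ↑(Finset.univ.filter fun x => ¬ (c x = 0)) := by ext x; simp
  have h2 := Finset.card_filter_add_card_filter_not
    (s := (Finset.univ : Finset (Fˣ × Fˣ))) (fun p => c p = 0)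
  rw [hammingWt, h1, Set.ncard_coe_finset]
  have h3 : (Finset.univ : Finset (Fˣ × Fˣ)).card = Fintype.card Fˣ * Fintype.card Fˣ := by
    simp [Fintype.card_prod]
  omega

open scoped Classical in
lemma filter_card_equiv {α β : Type} [Fintype α] [Fintype β] (e : α ≃ β) (P : β → Prop) :
    (Finset.univ.filter fun a => P (e a)).card = (Finset.univ.filter P).card := by
  refine Finset.card_bij (fun a _ => e a) ?_ ?_ ?_
  · intro a ha; simp only [Finset.mem_filter, Finset.mem_univ, true_and] at ha ⊢; exact ha
  · intro a _ b _ hab; exact e.injective hab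
  · intro b hb
    simp only [Finset.mem_filter, Finset.mem_univ, true_and] at hb ⊢
    exact ⟨e.symm b, by simpa using hb, by simp⟩

lemma minDist_eq {F : Type} [Field F] (C : Submodule F ((Fˣ × Fˣ) → F)) (w : ℕ)
    (hex : ∃ c ∈ C, c ≠ 0 ∧ hammingWt c = w)
    (hlb : ∀ c ∈ C, c ≠ 0 → w ≤ hammingWt c) : minDist C = w := by
  unfold minDist
  apply le_antisymm
  · obtain ⟨c, h1, h2, h3⟩ := hex
    exact Nat.sInf_le ⟨c, h1, h2, h3⟩
  · refine le_csInf ⟨w, hex⟩ ?_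
    rintro w' ⟨c, hc, hne, rfl⟩
    exact hlb c hc hne

lemma evalMonomial_eq {F : Type} [Field F] (m : ℤ × ℤ) (p : Fˣ × Fˣ) :
    evalMonomial m p = ((p.1 : F)) ^ m.1 * ((p.2 : F)) ^ m.2 := by
  simp [evalMonomial, Units.val_zpow_eq_zpow_val]

lemma mem_span_six {F M : Type*} [Field F] [AddCommGroup M] [Module F M]
    (v0 v1 v2 v3 v4 v5 x : M) :
    x ∈ Submodule.span F ({v0, v1, v2, v3, v4, v5} : Set M) ↔
      ∃ a0 a1 a2 a3 a4 a5 : F,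
        x = a0 • v0 + a1 • v1 + a2 • v2 + a3 • v3 + a4 • v4 + a5 • v5 := by
  constructor
  · intro h
    rw [Submodule.mem_span_insert] at h
    obtain ⟨a0, z0, hz0, rfl⟩ := h
    rw [Submodule.mem_span_insert] at hz0
    obtain ⟨a1, z1, hz1, rfl⟩ := hz0
    rw [Submodule.mem_span_insert] at hz1
    obtain ⟨a2, z2, hz2, rfl⟩ := hz1
    rw [Submodule.mem_span_insert] at hz2
    obtain ⟨a3, z3, hz3, rfl⟩ := hz2
    rw [Submodule.mem_span_insert] at hz3
    obtain ⟨a4, z4, hz4, rfl⟩ := hz3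
    rw [Submodule.mem_span_singleton] at hz4
    obtain ⟨a5, rfl⟩ := hz4
    exact ⟨a0, a1, a2, a3, a4, a5, by abel⟩
  · rintro ⟨a0, a1, a2, a3, a4, a5, rfl⟩
    have m0 : v0 ∈ ({v0, v1, v2, v3, v4, v5} : Set M) := by simp
    have m1 : v1 ∈ ({v0, v1, v2, v3, v4, v5} : Set M) := by simp
    have m2 : v2 ∈ ({v0, v1, v2, v3, v4, v5} : Set M) := by simp
    have m3 : v3 ∈ ({v0, v1, v2, v3, v4, v5} : Set M) := by simp
    have m4 : v4 ∈ ({v0, v1, v2, v3, v4, v5} : Set M) := by simp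
    have m5 : v5 ∈ ({v0, v1, v2, v3, v4, v5} : Set M) := by simp
    exact Submodule.add_mem _ (Submodule.add_mem _ (Submodule.add_mem _ (Submodule.add_mem _
      (Submodule.add_mem _
        (Submodule.smul_mem _ _ (Submodule.subset_span m0))
        (Submodule.smul_mem _ _ (Submodule.subset_span m1)))
        (Submodule.smul_mem _ _ (Submodule.subset_span m2)))
        (Submodule.smul_mem _ _ (Submodule.subset_span m3)))
        (Submodule.smul_mem _ _ (Submodule.subset_span m4)))
        (Submodule.smul_mem _ _ (Submodule.subset_span m5))

open Polynomial in
lemma quad_ne_zero {F : Type} [Field F] (a b c : F) (h : a ≠ 0 ∨ c ≠ 0) :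
    C a * X ^ 2 + C b * X + C c ≠ 0 := by
  intro h0
  rcases h with h | h
  · apply h
    have := congrArg (fun P => Polynomial.coeff P 2) h0
    simpa [coeff_add, coeff_C_mul, coeff_X_pow, coeff_X, coeff_C] using this
  · apply h
    have := congrArg (fun P => Polynomial.coeff P 0) h0
    simpa [coeff_add, coeff_C_mul, coeff_X_pow, coeff_X, coeff_C] using this

open Polynomial in
lemma lin_ne_zero {F : Type} [Field F] (a b : F) (h : a ≠ 0 ∨ b ≠ 0) :
    C a * X + C b ≠ 0 := by
  intro h0
  rcases h with h | h
  · apply h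
    have := congrArg (fun P => Polynomial.coeff P 1) h0
    simpa [coeff_add, coeff_C_mul, coeff_X_pow, coeff_X, coeff_C] using this
  · apply h
    have := congrArg (fun P => Polynomial.coeff P 0) h0
    simpa [coeff_add, coeff_C_mul, coeff_X_pow, coeff_X, coeff_C] using this

open Polynomial in
lemma cubic_ne_zero {F : Type} [Field F] (a b c d : F) (h : a ≠ 0 ∨ b ≠ 0) :
    C a * X ^ 3 + C b * X ^ 2 + C c * X + C d ≠ 0 := by
  intro h0
  rcases h with h | h
  · apply h
    have := congrArg (fun P => Polynomial.coeff P 3) h0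
    simpa [coeff_add, coeff_C_mul, coeff_X_pow, coeff_X, coeff_C] using this
  · apply h
    have := congrArg (fun P => Polynomial.coeff P 2) h0
    simpa [coeff_add, coeff_C_mul, coeff_X_pow, coeff_X, coeff_C] using this

lemma final_cast (q : ℕ) (h9 : 9 ≤ q) (N : ℕ) (hN : N = q - 1) :
    ((N * N - 3 * N : ℕ) : ℤ) = ((q : ℤ) - 1) ^ 2 - 3 * ((q : ℤ) - 1) := by
  subst hN
  have h1 : 3 * (q - 1) ≤ (q - 1) * (q - 1) := Nat.mul_le_mul_right _ (by omega)
  rw [Nat.cast_sub h1]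
  push_cast [Nat.cast_sub (show 1 ≤ q by omega)]
  ring

lemma convex_ineq (a b r : ℝ) : Convex ℝ {x : ℝ × ℝ | a * x.1 + b * x.2 ≤ r} :=
  convex_halfSpace_le ⟨fun p q => by simp only [Prod.fst_add, Prod.snd_add]; ring,
    fun c p => by simp only [Prod.smul_fst, Prod.smul_snd, smul_eq_mul]; ring⟩ r

lemma mem_hull_comb {s : Set (ℝ × ℝ)} {x y : ℝ × ℝ} (hx : x ∈ convexHull ℝ s)
    (hy : y ∈ convexHull ℝ s) (a b : ℝ) (ha : 0 ≤ a) (hb : 0 ≤ b) (hab : a + b = 1)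
    {z : ℝ × ℝ} (hz : a • x + b • y = z) : z ∈ convexHull ℝ s :=
  hz ▸ (convex_convexHull ℝ s) hx hy ha hb hab

lemma lp4 : latticePts (P6 4) =
    {(0,-1),(0,0),(0,1),(1,0),(2,0),(3,0)} := by
  ext p
  simp only [latticePts, Set.mem_setOf_eq]
  constructor
  · intro hp
    have hconv : Convex ℝ {x : ℝ × ℝ | (-1) * x.1 + 0 * x.2 ≤ 0 ∧
        1 * x.1 + (-3) * x.2 ≤ 3 ∧ 1 * x.1 + 3 * x.2 ≤ 3} :=
      (convex_ineq _ _ _).inter ((convex_ineq _ _ _).inter (convex_ineq _ _ _))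
    have hsub : toRealPt '' ↑(P6 4) ⊆ {x : ℝ × ℝ | (-1) * x.1 + 0 * x.2 ≤ 0 ∧
        1 * x.1 + (-3) * x.2 ≤ 3 ∧ 1 * x.1 + 3 * x.2 ≤ 3} := by
      intro x hx
      simp only [P6, Finset.coe_insert, Finset.coe_singleton, Set.image_insert_eq,
        Set.image_singleton, Set.mem_insert_iff, Set.mem_singleton_iff, toRealPt] at hx
      rcases hx with h | h | h <;> subst h <;> norm_num
    have h := convexHull_min hsub hconv hp
    obtain ⟨h1, h2, h3⟩ := h
    simp only [toRealPt] at h1 h2 h3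
    have g1 : (-1 : ℤ) * p.1 + 0 * p.2 ≤ 0 := by exact_mod_cast h1
    have g2 : (1 : ℤ) * p.1 + (-3) * p.2 ≤ 3 := by exact_mod_cast h2
    have g3 : (1 : ℤ) * p.1 + 3 * p.2 ≤ 3 := by exact_mod_cast h3
    simp only [Set.mem_insert_iff, Set.mem_singleton_iff, Prod.ext_iff]
    omega
  · intro hp
    have hA : toRealPt (0,-1) ∈ convexHull ℝ (toRealPt '' ↑(P6 4)) :=
      subset_convexHull ℝ _ ⟨(0,-1), by simp [P6], rfl⟩
    have hB : toRealPt (3,0) ∈ convexHull ℝ (toRealPt '' ↑(P6 4)) :=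
      subset_convexHull ℝ _ ⟨(3,0), by simp [P6], rfl⟩
    have hC : toRealPt (0,1) ∈ convexHull ℝ (toRealPt '' ↑(P6 4)) :=
      subset_convexHull ℝ _ ⟨(0,1), by simp [P6], rfl⟩
    have hO : toRealPt (0,0) ∈ convexHull ℝ (toRealPt '' ↑(P6 4)) := by
      refine mem_hull_comb hA hC (1/2) (1/2) (by norm_num) (by norm_num) (by norm_num) ?_
      simp only [toRealPt, Prod.ext_iff, Prod.smul_fst, Prod.smul_snd, Prod.fst_add,
        Prod.snd_add, smul_eq_mul]
      norm_num
    have h10 : toRealPt (1,0) ∈ convexHull ℝ (toRealPt '' ↑(P6 4)) := by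
      refine mem_hull_comb hO hB (2/3) (1/3) (by norm_num) (by norm_num) (by norm_num) ?_
      simp only [toRealPt, Prod.ext_iff, Prod.smul_fst, Prod.smul_snd, Prod.fst_add,
        Prod.snd_add, smul_eq_mul]
      norm_num
    have h20 : toRealPt (2,0) ∈ convexHull ℝ (toRealPt '' ↑(P6 4)) := by
      refine mem_hull_comb hO hB (1/3) (2/3) (by norm_num) (by norm_num) (by norm_num) ?_
      simp only [toRealPt, Prod.ext_iff, Prod.smul_fst, Prod.smul_snd, Prod.fst_add,
        Prod.snd_add, smul_eq_mul]
      norm_num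
    simp only [Set.mem_insert_iff, Set.mem_singleton_iff] at hp
    rcases hp with h | h | h | h | h | h <;> subst h <;> assumption

lemma lp5 : latticePts (P6 5) = {(-1,-1),(0,0),(0,1),(1,0),(2,0),(3,0)} := by
  ext p
  simp only [latticePts, Set.mem_setOf_eq]
  constructor
  · intro hp
    have hconv : Convex ℝ {x : ℝ × ℝ | 1 * x.1 + (-4) * x.2 ≤ 3 ∧
        1 * x.1 + 3 * x.2 ≤ 3 ∧ (-2) * x.1 + 1 * x.2 ≤ 1} :=
      (convex_ineq _ _ _).inter ((convex_ineq _ _ _).inter (convex_ineq _ _ _))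
    have hsub : toRealPt '' ↑(P6 5) ⊆ {x : ℝ × ℝ | 1 * x.1 + (-4) * x.2 ≤ 3 ∧
        1 * x.1 + 3 * x.2 ≤ 3 ∧ (-2) * x.1 + 1 * x.2 ≤ 1} := by
      intro x hx
      simp only [P6, Finset.coe_insert, Finset.coe_singleton, Set.image_insert_eq,
        Set.image_singleton, Set.mem_insert_iff, Set.mem_singleton_iff, toRealPt] at hx
      rcases hx with h | h | h <;> subst h <;> norm_num
    obtain ⟨h1, h2, h3⟩ := convexHull_min hsub hconv hp
    simp only [toRealPt] at h1 h2 h3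
    have g1 : (1 : ℤ) * p.1 + (-4) * p.2 ≤ 3 := by exact_mod_cast h1
    have g2 : (1 : ℤ) * p.1 + 3 * p.2 ≤ 3 := by exact_mod_cast h2
    have g3 : (-2 : ℤ) * p.1 + 1 * p.2 ≤ 1 := by exact_mod_cast h3
    simp only [Set.mem_insert_iff, Set.mem_singleton_iff, Prod.ext_iff]
    omega
  · intro hp
    have hA : toRealPt (-1,-1) ∈ convexHull ℝ (toRealPt '' ↑(P6 5)) :=
      subset_convexHull ℝ _ ⟨(-1,-1), by simp [P6], rfl⟩
    have hB : toRealPt (3,0) ∈ convexHull ℝ (toRealPt '' ↑(P6 5)) :=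
      subset_convexHull ℝ _ ⟨(3,0), by simp [P6], rfl⟩
    have hC : toRealPt (0,1) ∈ convexHull ℝ (toRealPt '' ↑(P6 5)) :=
      subset_convexHull ℝ _ ⟨(0,1), by simp [P6], rfl⟩
    have hW : ((3/4 : ℝ), (3/4 : ℝ)) ∈ convexHull ℝ (toRealPt '' ↑(P6 5)) := by
      refine mem_hull_comb hB hC (1/4) (3/4) (by norm_num) (by norm_num) (by norm_num) ?_
      simp only [toRealPt, Prod.ext_iff, Prod.smul_fst, Prod.smul_snd, Prod.fst_add,
        Prod.snd_add, smul_eq_mul]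
      norm_num
    have hO : toRealPt (0,0) ∈ convexHull ℝ (toRealPt '' ↑(P6 5)) := by
      refine mem_hull_comb hA hW (3/7) (4/7) (by norm_num) (by norm_num) (by norm_num) ?_
      simp only [toRealPt, Prod.ext_iff, Prod.smul_fst, Prod.smul_snd, Prod.fst_add,
        Prod.snd_add, smul_eq_mul]
      norm_num
    have h10 : toRealPt (1,0) ∈ convexHull ℝ (toRealPt '' ↑(P6 5)) := by
      refine mem_hull_comb hO hB (2/3) (1/3) (by norm_num) (by norm_num) (by norm_num) ?_
      simp only [toRealPt, Prod.ext_iff, Prod.smul_fst, Prod.smul_snd, Prod.fst_add,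
        Prod.snd_add, smul_eq_mul]
      norm_num
    have h20 : toRealPt (2,0) ∈ convexHull ℝ (toRealPt '' ↑(P6 5)) := by
      refine mem_hull_comb hO hB (1/3) (2/3) (by norm_num) (by norm_num) (by norm_num) ?_
      simp only [toRealPt, Prod.ext_iff, Prod.smul_fst, Prod.smul_snd, Prod.fst_add,
        Prod.snd_add, smul_eq_mul]
      norm_num
    simp only [Set.mem_insert_iff, Set.mem_singleton_iff] at hp
    rcases hp with h | h | h | h | h | h <;> subst h <;> assumption

lemma lp6 : latticePts (P6 6) = {(0,0),(0,1),(1,0),(1,1),(2,2),(3,3)} := by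
  ext p
  simp only [latticePts, Set.mem_setOf_eq]
  constructor
  · intro hp
    have hconv : Convex ℝ {x : ℝ × ℝ | (-1) * x.1 + 0 * x.2 ≤ 0 ∧
        0 * x.1 + (-1) * x.2 ≤ 0 ∧ 3 * x.1 + (-2) * x.2 ≤ 3 ∧ (-2) * x.1 + 3 * x.2 ≤ 3} :=
      (convex_ineq _ _ _).inter ((convex_ineq _ _ _).inter
        ((convex_ineq _ _ _).inter (convex_ineq _ _ _)))
    have hsub : toRealPt '' ↑(P6 6) ⊆ {x : ℝ × ℝ | (-1) * x.1 + 0 * x.2 ≤ 0 ∧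
        0 * x.1 + (-1) * x.2 ≤ 0 ∧ 3 * x.1 + (-2) * x.2 ≤ 3 ∧ (-2) * x.1 + 3 * x.2 ≤ 3} := by
      intro x hx
      simp only [P6, Finset.coe_insert, Finset.coe_singleton, Set.image_insert_eq,
        Set.image_singleton, Set.mem_insert_iff, Set.mem_singleton_iff, toRealPt] at hx
      rcases hx with h | h | h | h <;> subst h <;> norm_num
    obtain ⟨h1, h2, h3, h4⟩ := convexHull_min hsub hconv hp
    simp only [toRealPt] at h1 h2 h3 h4
    have g1 : (-1 : ℤ) * p.1 + 0 * p.2 ≤ 0 := by exact_mod_cast h1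
    have g2 : (0 : ℤ) * p.1 + (-1) * p.2 ≤ 0 := by exact_mod_cast h2
    have g3 : (3 : ℤ) * p.1 + (-2) * p.2 ≤ 3 := by exact_mod_cast h3
    have g4 : (-2 : ℤ) * p.1 + 3 * p.2 ≤ 3 := by exact_mod_cast h4
    simp only [Set.mem_insert_iff, Set.mem_singleton_iff, Prod.ext_iff]
    omega
  · intro hp
    have hA : toRealPt (0,0) ∈ convexHull ℝ (toRealPt '' ↑(P6 6)) :=
      subset_convexHull ℝ _ ⟨(0,0), by simp [P6], rfl⟩
    have hB : toRealPt (1,0) ∈ convexHull ℝ (toRealPt '' ↑(P6 6)) :=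
      subset_convexHull ℝ _ ⟨(1,0), by simp [P6], rfl⟩
    have hC : toRealPt (3,3) ∈ convexHull ℝ (toRealPt '' ↑(P6 6)) :=
      subset_convexHull ℝ _ ⟨(3,3), by simp [P6], rfl⟩
    have hD : toRealPt (0,1) ∈ convexHull ℝ (toRealPt '' ↑(P6 6)) :=
      subset_convexHull ℝ _ ⟨(0,1), by simp [P6], rfl⟩
    have h11 : toRealPt (1,1) ∈ convexHull ℝ (toRealPt '' ↑(P6 6)) := by
      refine mem_hull_comb hA hC (2/3) (1/3) (by norm_num) (by norm_num) (by norm_num) ?_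
      simp only [toRealPt, Prod.ext_iff, Prod.smul_fst, Prod.smul_snd, Prod.fst_add,
        Prod.snd_add, smul_eq_mul]
      norm_num
    have h22 : toRealPt (2,2) ∈ convexHull ℝ (toRealPt '' ↑(P6 6)) := by
      refine mem_hull_comb hA hC (1/3) (2/3) (by norm_num) (by norm_num) (by norm_num) ?_
      simp only [toRealPt, Prod.ext_iff, Prod.smul_fst, Prod.smul_snd, Prod.fst_add,
        Prod.snd_add, smul_eq_mul]
      norm_num
    simp only [Set.mem_insert_iff, Set.mem_singleton_iff] at hp
    rcases hp with h | h | h | h | h | h <;> subst h <;> assumption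

lemma lp7 : latticePts (P6 7) = {(0,0),(0,1),(1,0),(2,0),(3,-1),(3,0)} := by
  ext p
  simp only [latticePts, Set.mem_setOf_eq]
  constructor
  · intro hp
    have hconv : Convex ℝ {x : ℝ × ℝ | (-1) * x.1 + 0 * x.2 ≤ 0 ∧
        1 * x.1 + 0 * x.2 ≤ 3 ∧ 1 * x.1 + 3 * x.2 ≤ 3 ∧ (-1) * x.1 + (-3) * x.2 ≤ 0} :=
      (convex_ineq _ _ _).inter ((convex_ineq _ _ _).inter
        ((convex_ineq _ _ _).inter (convex_ineq _ _ _)))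
    have hsub : toRealPt '' ↑(P6 7) ⊆ {x : ℝ × ℝ | (-1) * x.1 + 0 * x.2 ≤ 0 ∧
        1 * x.1 + 0 * x.2 ≤ 3 ∧ 1 * x.1 + 3 * x.2 ≤ 3 ∧ (-1) * x.1 + (-3) * x.2 ≤ 0} := by
      intro x hx
      simp only [P6, Finset.coe_insert, Finset.coe_singleton, Set.image_insert_eq,
        Set.image_singleton, Set.mem_insert_iff, Set.mem_singleton_iff, toRealPt] at hx
      rcases hx with h | h | h | h <;> subst h <;> norm_num
    obtain ⟨h1, h2, h3, h4⟩ := convexHull_min hsub hconv hp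
    simp only [toRealPt] at h1 h2 h3 h4
    have g1 : (-1 : ℤ) * p.1 + 0 * p.2 ≤ 0 := by exact_mod_cast h1
    have g2 : (1 : ℤ) * p.1 + 0 * p.2 ≤ 3 := by exact_mod_cast h2
    have g3 : (1 : ℤ) * p.1 + 3 * p.2 ≤ 3 := by exact_mod_cast h3
    have g4 : (-1 : ℤ) * p.1 + (-3) * p.2 ≤ 0 := by exact_mod_cast h4
    simp only [Set.mem_insert_iff, Set.mem_singleton_iff, Prod.ext_iff]
    omega
  · intro hp
    have hA : toRealPt (0,0) ∈ convexHull ℝ (toRealPt '' ↑(P6 7)) :=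
      subset_convexHull ℝ _ ⟨(0,0), by simp [P6], rfl⟩
    have hB : toRealPt (0,1) ∈ convexHull ℝ (toRealPt '' ↑(P6 7)) :=
      subset_convexHull ℝ _ ⟨(0,1), by simp [P6], rfl⟩
    have hC : toRealPt (3,0) ∈ convexHull ℝ (toRealPt '' ↑(P6 7)) :=
      subset_convexHull ℝ _ ⟨(3,0), by simp [P6], rfl⟩
    have hD : toRealPt (3,-1) ∈ convexHull ℝ (toRealPt '' ↑(P6 7)) :=
      subset_convexHull ℝ _ ⟨(3,-1), by simp [P6], rfl⟩
    have h10 : toRealPt (1,0) ∈ convexHull ℝ (toRealPt '' ↑(P6 7)) := by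
      refine mem_hull_comb hA hC (2/3) (1/3) (by norm_num) (by norm_num) (by norm_num) ?_
      simp only [toRealPt, Prod.ext_iff, Prod.smul_fst, Prod.smul_snd, Prod.fst_add,
        Prod.snd_add, smul_eq_mul]
      norm_num
    have h20 : toRealPt (2,0) ∈ convexHull ℝ (toRealPt '' ↑(P6 7)) := by
      refine mem_hull_comb hA hC (1/3) (2/3) (by norm_num) (by norm_num) (by norm_num) ?_
      simp only [toRealPt, Prod.ext_iff, Prod.smul_fst, Prod.smul_snd, Prod.fst_add,
        Prod.snd_add, smul_eq_mul]
      norm_num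
    simp only [Set.mem_insert_iff, Set.mem_singleton_iff] at hp
    rcases hp with h | h | h | h | h | h <;> subst h <;> assumption

lemma lp8 : latticePts (P6 8) = {(-1,0),(0,-1),(0,0),(0,1),(1,0),(2,0)} := by
  ext p
  simp only [latticePts, Set.mem_setOf_eq]
  constructor
  · intro hp
    have hconv : Convex ℝ {x : ℝ × ℝ | (-1) * x.1 + 1 * x.2 ≤ 1 ∧
        1 * x.1 + 2 * x.2 ≤ 2 ∧ 1 * x.1 + (-2) * x.2 ≤ 2 ∧ (-1) * x.1 + (-1) * x.2 ≤ 1} :=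
      (convex_ineq _ _ _).inter ((convex_ineq _ _ _).inter
        ((convex_ineq _ _ _).inter (convex_ineq _ _ _)))
    have hsub : toRealPt '' ↑(P6 8) ⊆ {x : ℝ × ℝ | (-1) * x.1 + 1 * x.2 ≤ 1 ∧
        1 * x.1 + 2 * x.2 ≤ 2 ∧ 1 * x.1 + (-2) * x.2 ≤ 2 ∧ (-1) * x.1 + (-1) * x.2 ≤ 1} := by
      intro x hx
      simp only [P6, Finset.coe_insert, Finset.coe_singleton, Set.image_insert_eq,
        Set.image_singleton, Set.mem_insert_iff, Set.mem_singleton_iff, toRealPt] at hx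
      rcases hx with h | h | h | h <;> subst h <;> norm_num
    obtain ⟨h1, h2, h3, h4⟩ := convexHull_min hsub hconv hp
    simp only [toRealPt] at h1 h2 h3 h4
    have g1 : (-1 : ℤ) * p.1 + 1 * p.2 ≤ 1 := by exact_mod_cast h1
    have g2 : (1 : ℤ) * p.1 + 2 * p.2 ≤ 2 := by exact_mod_cast h2
    have g3 : (1 : ℤ) * p.1 + (-2) * p.2 ≤ 2 := by exact_mod_cast h3
    have g4 : (-1 : ℤ) * p.1 + (-1) * p.2 ≤ 1 := by exact_mod_cast h4
    simp only [Set.mem_insert_iff, Set.mem_singleton_iff, Prod.ext_iff]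
    omega
  · intro hp
    have hA : toRealPt (-1,0) ∈ convexHull ℝ (toRealPt '' ↑(P6 8)) :=
      subset_convexHull ℝ _ ⟨(-1,0), by simp [P6], rfl⟩
    have hB : toRealPt (0,1) ∈ convexHull ℝ (toRealPt '' ↑(P6 8)) :=
      subset_convexHull ℝ _ ⟨(0,1), by simp [P6], rfl⟩
    have hC : toRealPt (2,0) ∈ convexHull ℝ (toRealPt '' ↑(P6 8)) :=
      subset_convexHull ℝ _ ⟨(2,0), by simp [P6], rfl⟩
    have hD : toRealPt (0,-1) ∈ convexHull ℝ (toRealPt '' ↑(P6 8)) :=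
      subset_convexHull ℝ _ ⟨(0,-1), by simp [P6], rfl⟩
    have hO : toRealPt (0,0) ∈ convexHull ℝ (toRealPt '' ↑(P6 8)) := by
      refine mem_hull_comb hB hD (1/2) (1/2) (by norm_num) (by norm_num) (by norm_num) ?_
      simp only [toRealPt, Prod.ext_iff, Prod.smul_fst, Prod.smul_snd, Prod.fst_add,
        Prod.snd_add, smul_eq_mul]
      norm_num
    have h10 : toRealPt (1,0) ∈ convexHull ℝ (toRealPt '' ↑(P6 8)) := by
      refine mem_hull_comb hO hC (1/2) (1/2) (by norm_num) (by norm_num) (by norm_num) ?_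
      simp only [toRealPt, Prod.ext_iff, Prod.smul_fst, Prod.smul_snd, Prod.fst_add,
        Prod.snd_add, smul_eq_mul]
      norm_num
    simp only [Set.mem_insert_iff, Set.mem_singleton_iff] at hp
    rcases hp with h | h | h | h | h | h <;> subst h <;> assumption


open scoped Classical in
lemma tcode4 {F : Type} [Field F] [Fintype F] :
    toricCode F (latticePts (P6 4)) = Submodule.span F
      ({evalMonomial (0,-1), evalMonomial (0,0), evalMonomial (0,1), evalMonomial (1,0), evalMonomial (2,0), evalMonomial (3,0)} : Set ((Fˣ × Fˣ) → F)) := by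
  rw [toricCode, lp4]
  congr 1
  simp [Set.image_insert_eq]


open Polynomial in
open scoped Classical in
lemma case4 {F : Type} [Field F] [Fintype F] (h9 : 9 ≤ Fintype.card F) :
    minDist (toricCode F (latticePts (P6 4)))
      = (Fintype.card F - 1) * (Fintype.card F - 1) - 3 * (Fintype.card F - 1) := by
  classical
  have hNu : Fintype.card Fˣ = Fintype.card F - 1 := Fintype.card_units F
  rw [← hNu]
  set N := Fintype.card Fˣ with hNdef
  have hN : 8 ≤ N := by
    rw [hNdef, Fintype.card_units]; omega
  have hNN : 8 * N ≤ N * N := Nat.mul_le_mul_right N hN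
  apply minDist_eq
  · obtain ⟨t3, ht3sub, ht3card⟩ :=
      Finset.exists_subset_card_eq (show 3 ≤ (Finset.univ : Finset Fˣ).card by
        simpa using by omega)
    obtain ⟨x, y, z, hxy, hxz, hyz, rfl⟩ := Finset.card_eq_three.mp ht3card
    set cex : (Fˣ × Fˣ) → F :=
      fun p => ((p.1 : F) - ↑x) * ((p.1 : F) - ↑y) * ((p.1 : F) - ↑z) with hcex
    have hmem : cex ∈ toricCode F (latticePts (P6 4)) := by
      rw [tcode4, mem_span_six]
      refine ⟨0, -(↑x * ↑y * ↑z), 0, ↑x * ↑y + ↑x * ↑z + ↑y * ↑z, -(↑x + ↑y + ↑z), 1, ?_⟩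
      funext p
      simp only [Pi.add_apply, Pi.smul_apply, smul_eq_mul, hcex, evalMonomial_eq]
      norm_num [zpow_ofNat]
      try field_simp
      try ring
    have hzs : (Finset.univ.filter fun p : Fˣ × Fˣ => cex p = 0)
        = ({x, y, z} : Finset Fˣ) ×ˢ Finset.univ := by
      ext p
      simp only [Finset.mem_filter, Finset.mem_univ, true_and, Finset.mem_product,
        Finset.mem_insert, Finset.mem_singleton, and_true, hcex]
      rw [mul_eq_zero, mul_eq_zero, sub_eq_zero, sub_eq_zero, sub_eq_zero]
      constructor
      · rintro ((h | h) | h) <;> simp [Units.ext h]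
      · rintro (h | h | h) <;> subst h <;> simp
    have hzcard : (Finset.univ.filter fun p : Fˣ × Fˣ => cex p = 0).card = 3 * N := by
      rw [hzs, Finset.card_product, Finset.card_univ]
      have h3 : ({x, y, z} : Finset Fˣ).card = 3 := by
        rw [Finset.card_insert_of_notMem (by simp [hxy, hxz]),
          Finset.card_insert_of_notMem (by simp [hyz]), Finset.card_singleton]
      rw [h3]
    have hwt : hammingWt cex = N * N - 3 * N := by
      rw [hammingWt_eq, hzcard]
    refine ⟨cex, hmem, ?_, hwt⟩
    intro h0
    rw [h0] at hwt
    have : hammingWt (0 : (Fˣ × Fˣ) → F) = 0 := by simp [hammingWt]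
    omega
  · intro c hc hcne
    rw [tcode4, mem_span_six] at hc
    obtain ⟨a0, a1, a2, a3, a4, a5, rfl⟩ := hc
    set c : (Fˣ × Fˣ) → F := a0 • evalMonomial (0,-1) + a1 • evalMonomial (0,0) + a2 • evalMonomial (0,1) + a3 • evalMonomial (1,0) + a4 • evalMonomial (2,0) + a5 • evalMonomial (3,0) with hcdef
    have hrep : ∀ p : Fˣ × Fˣ, c p = a0 * ((p.2 : F))⁻¹ + a1 + a2 * (p.2 : F) + a3 * (p.1 : F) + a4 * (p.1 : F) ^ 2 + a5 * (p.1 : F) ^ 3 := by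
      intro p
      simp only [hcdef, Pi.add_apply, Pi.smul_apply, smul_eq_mul, evalMonomial_eq]
      norm_num [zpow_ofNat]
      try ring
    rw [hammingWt_eq]
    have hbound : (Finset.univ.filter fun p : Fˣ × Fˣ => c p = 0).card ≤ 3 * N := by
      by_cases h02 : a0 = 0 ∧ a2 = 0
      · set P : Polynomial F := C a5 * X ^ 3 + C a4 * X ^ 2 + C a3 * X + C a1
          with hPdef
        have hev : ∀ p : Fˣ × Fˣ, c p = P.eval (p.1 : F) := by
          intro p
          rw [hrep p, h02.1, h02.2]
          simp only [hPdef, eval_add, eval_mul, eval_pow, eval_C, eval_X]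
          ring
        have hP : P ≠ 0 := by
          intro hP0
          exact hcne (funext fun p => by rw [hev p, hP0, eval_zero, Pi.zero_apply])
        have e1 : (Finset.univ.filter fun p : Fˣ × Fˣ => c p = 0)
            = Finset.univ.filter fun p : Fˣ × Fˣ => P.eval (p.1 : F) = 0 :=
          Finset.filter_congr fun p _ => by rw [hev p]
        have e2 : (Finset.univ.filter fun p : Fˣ × Fˣ => P.eval (p.1 : F) = 0).card
            = (Finset.univ.filter fun p : Fˣ × Fˣ => P.eval (p.2 : F) = 0).card :=
          filter_card_equiv (Equiv.prodComm Fˣ Fˣ) (fun p : Fˣ × Fˣ => P.eval (p.2 : F) = 0)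
        rw [e1, e2]
        have hb := zeros_bound (fun p : Fˣ × Fˣ => P.eval (p.2 : F)) ∅ 3
          (fun t _ => units_root_card_le P hP 3 natDegree_cubic_le)
        simpa using hb
      · have h02' : a0 ≠ 0 ∨ a2 ≠ 0 := by tauto
        set Q : F → Polynomial F := fun u => C a2 * X ^ 2 + C (a1 + a3 * u + a4 * u ^ 2 + a5 * u ^ 3) * X + C a0 with hQdef
        have key : ∀ p : Fˣ × Fˣ, (c p = 0 ↔ (Q (p.1 : F)).eval (p.2 : F) = 0) := by
          intro p
          have h1 : ((p.1 : F)) ≠ 0 := Units.ne_zero _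
          have h2 : ((p.2 : F)) ≠ 0 := Units.ne_zero _
          have hmul : (Q (p.1 : F)).eval (p.2 : F) = (p.2 : F) * c p := by
            rw [hrep p, hQdef]
            simp only [eval_add, eval_mul, eval_pow, eval_C, eval_X]
            field_simp
            ring
          rw [hmul, mul_eq_zero]
          tauto
        have e1 : (Finset.univ.filter fun p : Fˣ × Fˣ => c p = 0)
            = Finset.univ.filter fun p : Fˣ × Fˣ => (Q (p.1 : F)).eval (p.2 : F) = 0 :=
          Finset.filter_congr fun p _ => key p
        rw [e1]
        have hQne : ∀ t : Fˣ, Q (t : F) ≠ 0 := by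
          intro t
          rw [hQdef]
          refine quad_ne_zero _ _ _ ?_
          rcases h02' with h | h
          · exact Or.inr h
          · exact Or.inl h
        have hb := zeros_bound (fun p : Fˣ × Fˣ => (Q (p.1 : F)).eval (p.2 : F)) ∅ 2
          (fun t _ => units_root_card_le (Q (t : F)) (hQne t) 2 natDegree_quadratic_le)
        simp only [Finset.card_empty, Nat.zero_add] at hb
        exact hb.trans (by omega)
    exact Nat.sub_le_sub_left hbound _


open scoped Classical in
lemma tcode5 {F : Type} [Field F] [Fintype F] :
    toricCode F (latticePts (P6 5)) = Submodule.span F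
      ({evalMonomial (-1,-1), evalMonomial (0,0), evalMonomial (0,1), evalMonomial (1,0), evalMonomial (2,0), evalMonomial (3,0)} : Set ((Fˣ × Fˣ) → F)) := by
  rw [toricCode, lp5]
  congr 1
  simp [Set.image_insert_eq]


open Polynomial in
open scoped Classical in
lemma case5 {F : Type} [Field F] [Fintype F] (h9 : 9 ≤ Fintype.card F) :
    minDist (toricCode F (latticePts (P6 5)))
      = (Fintype.card F - 1) * (Fintype.card F - 1) - 3 * (Fintype.card F - 1) := by
  classical
  have hNu : Fintype.card Fˣ = Fintype.card F - 1 := Fintype.card_units F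
  rw [← hNu]
  set N := Fintype.card Fˣ with hNdef
  have hN : 8 ≤ N := by
    rw [hNdef, Fintype.card_units]; omega
  have hNN : 8 * N ≤ N * N := Nat.mul_le_mul_right N hN
  apply minDist_eq
  · obtain ⟨t3, ht3sub, ht3card⟩ :=
      Finset.exists_subset_card_eq (show 3 ≤ (Finset.univ : Finset Fˣ).card by
        simpa using by omega)
    obtain ⟨x, y, z, hxy, hxz, hyz, rfl⟩ := Finset.card_eq_three.mp ht3card
    set cex : (Fˣ × Fˣ) → F :=
      fun p => ((p.1 : F) - ↑x) * ((p.1 : F) - ↑y) * ((p.1 : F) - ↑z) with hcex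
    have hmem : cex ∈ toricCode F (latticePts (P6 5)) := by
      rw [tcode5, mem_span_six]
      refine ⟨0, -(↑x * ↑y * ↑z), 0, ↑x * ↑y + ↑x * ↑z + ↑y * ↑z, -(↑x + ↑y + ↑z), 1, ?_⟩
      funext p
      simp only [Pi.add_apply, Pi.smul_apply, smul_eq_mul, hcex, evalMonomial_eq]
      norm_num [zpow_ofNat]
      try field_simp
      try ring
    have hzs : (Finset.univ.filter fun p : Fˣ × Fˣ => cex p = 0)
        = ({x, y, z} : Finset Fˣ) ×ˢ Finset.univ := by
      ext p
      simp only [Finset.mem_filter, Finset.mem_univ, true_and, Finset.mem_product,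
        Finset.mem_insert, Finset.mem_singleton, and_true, hcex]
      rw [mul_eq_zero, mul_eq_zero, sub_eq_zero, sub_eq_zero, sub_eq_zero]
      constructor
      · rintro ((h | h) | h) <;> simp [Units.ext h]
      · rintro (h | h | h) <;> subst h <;> simp
    have hzcard : (Finset.univ.filter fun p : Fˣ × Fˣ => cex p = 0).card = 3 * N := by
      rw [hzs, Finset.card_product, Finset.card_univ]
      have h3 : ({x, y, z} : Finset Fˣ).card = 3 := by
        rw [Finset.card_insert_of_notMem (by simp [hxy, hxz]),
          Finset.card_insert_of_notMem (by simp [hyz]), Finset.card_singleton]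
      rw [h3]
    have hwt : hammingWt cex = N * N - 3 * N := by
      rw [hammingWt_eq, hzcard]
    refine ⟨cex, hmem, ?_, hwt⟩
    intro h0
    rw [h0] at hwt
    have : hammingWt (0 : (Fˣ × Fˣ) → F) = 0 := by simp [hammingWt]
    omega
  · intro c hc hcne
    rw [tcode5, mem_span_six] at hc
    obtain ⟨a0, a1, a2, a3, a4, a5, rfl⟩ := hc
    set c : (Fˣ × Fˣ) → F := a0 • evalMonomial (-1,-1) + a1 • evalMonomial (0,0) + a2 • evalMonomial (0,1) + a3 • evalMonomial (1,0) + a4 • evalMonomial (2,0) + a5 • evalMonomial (3,0) with hcdef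
    have hrep : ∀ p : Fˣ × Fˣ, c p = a0 * ((p.1 : F))⁻¹ * ((p.2 : F))⁻¹ + a1 + a2 * (p.2 : F) + a3 * (p.1 : F) + a4 * (p.1 : F) ^ 2 + a5 * (p.1 : F) ^ 3 := by
      intro p
      simp only [hcdef, Pi.add_apply, Pi.smul_apply, smul_eq_mul, evalMonomial_eq]
      norm_num [zpow_ofNat]
      try ring
    rw [hammingWt_eq]
    have hbound : (Finset.univ.filter fun p : Fˣ × Fˣ => c p = 0).card ≤ 3 * N := by
      by_cases h02 : a0 = 0 ∧ a2 = 0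
      · set P : Polynomial F := C a5 * X ^ 3 + C a4 * X ^ 2 + C a3 * X + C a1
          with hPdef
        have hev : ∀ p : Fˣ × Fˣ, c p = P.eval (p.1 : F) := by
          intro p
          rw [hrep p, h02.1, h02.2]
          simp only [hPdef, eval_add, eval_mul, eval_pow, eval_C, eval_X]
          ring
        have hP : P ≠ 0 := by
          intro hP0
          exact hcne (funext fun p => by rw [hev p, hP0, eval_zero, Pi.zero_apply])
        have e1 : (Finset.univ.filter fun p : Fˣ × Fˣ => c p = 0)
            = Finset.univ.filter fun p : Fˣ × Fˣ => P.eval (p.1 : F) = 0 :=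
          Finset.filter_congr fun p _ => by rw [hev p]
        have e2 : (Finset.univ.filter fun p : Fˣ × Fˣ => P.eval (p.1 : F) = 0).card
            = (Finset.univ.filter fun p : Fˣ × Fˣ => P.eval (p.2 : F) = 0).card :=
          filter_card_equiv (Equiv.prodComm Fˣ Fˣ) (fun p : Fˣ × Fˣ => P.eval (p.2 : F) = 0)
        rw [e1, e2]
        have hb := zeros_bound (fun p : Fˣ × Fˣ => P.eval (p.2 : F)) ∅ 3
          (fun t _ => units_root_card_le P hP 3 natDegree_cubic_le)
        simpa using hb
      · have h02' : a0 ≠ 0 ∨ a2 ≠ 0 := by tauto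
        set Q : F → Polynomial F := fun u => C a2 * X ^ 2 + C (a1 + a3 * u + a4 * u ^ 2 + a5 * u ^ 3) * X + C (a0 * u⁻¹) with hQdef
        have key : ∀ p : Fˣ × Fˣ, (c p = 0 ↔ (Q (p.1 : F)).eval (p.2 : F) = 0) := by
          intro p
          have h1 : ((p.1 : F)) ≠ 0 := Units.ne_zero _
          have h2 : ((p.2 : F)) ≠ 0 := Units.ne_zero _
          have hmul : (Q (p.1 : F)).eval (p.2 : F) = (p.2 : F) * c p := by
            rw [hrep p, hQdef]
            simp only [eval_add, eval_mul, eval_pow, eval_C, eval_X]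
            field_simp
            ring
          rw [hmul, mul_eq_zero]
          tauto
        have e1 : (Finset.univ.filter fun p : Fˣ × Fˣ => c p = 0)
            = Finset.univ.filter fun p : Fˣ × Fˣ => (Q (p.1 : F)).eval (p.2 : F) = 0 :=
          Finset.filter_congr fun p _ => key p
        rw [e1]
        have hQne : ∀ t : Fˣ, Q (t : F) ≠ 0 := by
          intro t
          rw [hQdef]
          refine quad_ne_zero _ _ _ ?_
          rcases h02' with h | h
          · exact Or.inr (mul_ne_zero h (inv_ne_zero (Units.ne_zero t)))
          · exact Or.inl h
        have hb := zeros_bound (fun p : Fˣ × Fˣ => (Q (p.1 : F)).eval (p.2 : F)) ∅ 2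
          (fun t _ => units_root_card_le (Q (t : F)) (hQne t) 2 natDegree_quadratic_le)
        simp only [Finset.card_empty, Nat.zero_add] at hb
        exact hb.trans (by omega)
    exact Nat.sub_le_sub_left hbound _


open scoped Classical in
lemma tcode7 {F : Type} [Field F] [Fintype F] :
    toricCode F (latticePts (P6 7)) = Submodule.span F
      ({evalMonomial (0,0), evalMonomial (0,1), evalMonomial (1,0), evalMonomial (2,0), evalMonomial (3,-1), evalMonomial (3,0)} : Set ((Fˣ × Fˣ) → F)) := by
  rw [toricCode, lp7]
  congr 1
  simp [Set.image_insert_eq]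


open Polynomial in
open scoped Classical in
lemma case7 {F : Type} [Field F] [Fintype F] (h9 : 9 ≤ Fintype.card F) :
    minDist (toricCode F (latticePts (P6 7)))
      = (Fintype.card F - 1) * (Fintype.card F - 1) - 3 * (Fintype.card F - 1) := by
  classical
  have hNu : Fintype.card Fˣ = Fintype.card F - 1 := Fintype.card_units F
  rw [← hNu]
  set N := Fintype.card Fˣ with hNdef
  have hN : 8 ≤ N := by
    rw [hNdef, Fintype.card_units]; omega
  have hNN : 8 * N ≤ N * N := Nat.mul_le_mul_right N hN
  apply minDist_eq
  · obtain ⟨t3, ht3sub, ht3card⟩ :=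
      Finset.exists_subset_card_eq (show 3 ≤ (Finset.univ : Finset Fˣ).card by
        simpa using by omega)
    obtain ⟨x, y, z, hxy, hxz, hyz, rfl⟩ := Finset.card_eq_three.mp ht3card
    set cex : (Fˣ × Fˣ) → F :=
      fun p => ((p.1 : F) - ↑x) * ((p.1 : F) - ↑y) * ((p.1 : F) - ↑z) with hcex
    have hmem : cex ∈ toricCode F (latticePts (P6 7)) := by
      rw [tcode7, mem_span_six]
      refine ⟨-(↑x * ↑y * ↑z), 0, ↑x * ↑y + ↑x * ↑z + ↑y * ↑z, -(↑x + ↑y + ↑z), 0, 1, ?_⟩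
      funext p
      simp only [Pi.add_apply, Pi.smul_apply, smul_eq_mul, hcex, evalMonomial_eq]
      norm_num [zpow_ofNat]
      try field_simp
      try ring
    have hzs : (Finset.univ.filter fun p : Fˣ × Fˣ => cex p = 0)
        = ({x, y, z} : Finset Fˣ) ×ˢ Finset.univ := by
      ext p
      simp only [Finset.mem_filter, Finset.mem_univ, true_and, Finset.mem_product,
        Finset.mem_insert, Finset.mem_singleton, and_true, hcex]
      rw [mul_eq_zero, mul_eq_zero, sub_eq_zero, sub_eq_zero, sub_eq_zero]
      constructor
      · rintro ((h | h) | h) <;> simp [Units.ext h]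
      · rintro (h | h | h) <;> subst h <;> simp
    have hzcard : (Finset.univ.filter fun p : Fˣ × Fˣ => cex p = 0).card = 3 * N := by
      rw [hzs, Finset.card_product, Finset.card_univ]
      have h3 : ({x, y, z} : Finset Fˣ).card = 3 := by
        rw [Finset.card_insert_of_notMem (by simp [hxy, hxz]),
          Finset.card_insert_of_notMem (by simp [hyz]), Finset.card_singleton]
      rw [h3]
    have hwt : hammingWt cex = N * N - 3 * N := by
      rw [hammingWt_eq, hzcard]
    refine ⟨cex, hmem, ?_, hwt⟩
    intro h0
    rw [h0] at hwt
    have : hammingWt (0 : (Fˣ × Fˣ) → F) = 0 := by simp [hammingWt]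
    omega
  · intro c hc hcne
    rw [tcode7, mem_span_six] at hc
    obtain ⟨a0, a1, a2, a3, a4, a5, rfl⟩ := hc
    set c : (Fˣ × Fˣ) → F := a0 • evalMonomial (0,0) + a1 • evalMonomial (0,1) + a2 • evalMonomial (1,0) + a3 • evalMonomial (2,0) + a4 • evalMonomial (3,-1) + a5 • evalMonomial (3,0) with hcdef
    have hrep : ∀ p : Fˣ × Fˣ, c p = a0 + a1 * (p.2 : F) + a2 * (p.1 : F) + a3 * (p.1 : F) ^ 2 + a4 * (p.1 : F) ^ 3 * ((p.2 : F))⁻¹ + a5 * (p.1 : F) ^ 3 := by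
      intro p
      simp only [hcdef, Pi.add_apply, Pi.smul_apply, smul_eq_mul, evalMonomial_eq]
      norm_num [zpow_ofNat]
      try ring
    rw [hammingWt_eq]
    have hbound : (Finset.univ.filter fun p : Fˣ × Fˣ => c p = 0).card ≤ 3 * N := by
      by_cases h02 : a4 = 0 ∧ a1 = 0
      · set P : Polynomial F := C a5 * X ^ 3 + C a3 * X ^ 2 + C a2 * X + C a0
          with hPdef
        have hev : ∀ p : Fˣ × Fˣ, c p = P.eval (p.1 : F) := by
          intro p
          rw [hrep p, h02.1, h02.2]
          simp only [hPdef, eval_add, eval_mul, eval_pow, eval_C, eval_X]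
          ring
        have hP : P ≠ 0 := by
          intro hP0
          exact hcne (funext fun p => by rw [hev p, hP0, eval_zero, Pi.zero_apply])
        have e1 : (Finset.univ.filter fun p : Fˣ × Fˣ => c p = 0)
            = Finset.univ.filter fun p : Fˣ × Fˣ => P.eval (p.1 : F) = 0 :=
          Finset.filter_congr fun p _ => by rw [hev p]
        have e2 : (Finset.univ.filter fun p : Fˣ × Fˣ => P.eval (p.1 : F) = 0).card
            = (Finset.univ.filter fun p : Fˣ × Fˣ => P.eval (p.2 : F) = 0).card :=
          filter_card_equiv (Equiv.prodComm Fˣ Fˣ) (fun p : Fˣ × Fˣ => P.eval (p.2 : F) = 0)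
        rw [e1, e2]
        have hb := zeros_bound (fun p : Fˣ × Fˣ => P.eval (p.2 : F)) ∅ 3
          (fun t _ => units_root_card_le P hP 3 natDegree_cubic_le)
        simpa using hb
      · have h02' : a4 ≠ 0 ∨ a1 ≠ 0 := by tauto
        set Q : F → Polynomial F := fun u => C a1 * X ^ 2 + C (a0 + a2 * u + a3 * u ^ 2 + a5 * u ^ 3) * X + C (a4 * u ^ 3) with hQdef
        have key : ∀ p : Fˣ × Fˣ, (c p = 0 ↔ (Q (p.1 : F)).eval (p.2 : F) = 0) := by
          intro p
          have h1 : ((p.1 : F)) ≠ 0 := Units.ne_zero _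
          have h2 : ((p.2 : F)) ≠ 0 := Units.ne_zero _
          have hmul : (Q (p.1 : F)).eval (p.2 : F) = (p.2 : F) * c p := by
            rw [hrep p, hQdef]
            simp only [eval_add, eval_mul, eval_pow, eval_C, eval_X]
            field_simp
            ring
          rw [hmul, mul_eq_zero]
          tauto
        have e1 : (Finset.univ.filter fun p : Fˣ × Fˣ => c p = 0)
            = Finset.univ.filter fun p : Fˣ × Fˣ => (Q (p.1 : F)).eval (p.2 : F) = 0 :=
          Finset.filter_congr fun p _ => key p
        rw [e1]
        have hQne : ∀ t : Fˣ, Q (t : F) ≠ 0 := by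
          intro t
          rw [hQdef]
          refine quad_ne_zero _ _ _ ?_
          rcases h02' with h | h
          · exact Or.inr (mul_ne_zero h (pow_ne_zero 3 (Units.ne_zero t)))
          · exact Or.inl h
        have hb := zeros_bound (fun p : Fˣ × Fˣ => (Q (p.1 : F)).eval (p.2 : F)) ∅ 2
          (fun t _ => units_root_card_le (Q (t : F)) (hQne t) 2 natDegree_quadratic_le)
        simp only [Finset.card_empty, Nat.zero_add] at hb
        exact hb.trans (by omega)
    exact Nat.sub_le_sub_left hbound _


open scoped Classical in
lemma tcode8 {F : Type} [Field F] [Fintype F] :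
    toricCode F (latticePts (P6 8)) = Submodule.span F
      ({evalMonomial (-1,0), evalMonomial (0,-1), evalMonomial (0,0), evalMonomial (0,1), evalMonomial (1,0), evalMonomial (2,0)} : Set ((Fˣ × Fˣ) → F)) := by
  rw [toricCode, lp8]
  congr 1
  simp [Set.image_insert_eq]


open Polynomial in
open scoped Classical in
lemma case8 {F : Type} [Field F] [Fintype F] (h9 : 9 ≤ Fintype.card F) :
    minDist (toricCode F (latticePts (P6 8)))
      = (Fintype.card F - 1) * (Fintype.card F - 1) - 3 * (Fintype.card F - 1) := by
  classical
  have hNu : Fintype.card Fˣ = Fintype.card F - 1 := Fintype.card_units F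
  rw [← hNu]
  set N := Fintype.card Fˣ with hNdef
  have hN : 8 ≤ N := by
    rw [hNdef, Fintype.card_units]; omega
  have hNN : 8 * N ≤ N * N := Nat.mul_le_mul_right N hN
  apply minDist_eq
  · obtain ⟨t3, ht3sub, ht3card⟩ :=
      Finset.exists_subset_card_eq (show 3 ≤ (Finset.univ : Finset Fˣ).card by
        simpa using by omega)
    obtain ⟨x, y, z, hxy, hxz, hyz, rfl⟩ := Finset.card_eq_three.mp ht3card
    set cex : (Fˣ × Fˣ) → F :=
      fun p => ((p.1 : F))⁻¹ * (((p.1 : F) - ↑x) * ((p.1 : F) - ↑y) * ((p.1 : F) - ↑z)) with hcex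
    have hmem : cex ∈ toricCode F (latticePts (P6 8)) := by
      rw [tcode8, mem_span_six]
      refine ⟨-(↑x * ↑y * ↑z), 0, ↑x * ↑y + ↑x * ↑z + ↑y * ↑z, 0, -(↑x + ↑y + ↑z), 1, ?_⟩
      funext p
      have h1 : ((p.1 : F)) ≠ 0 := Units.ne_zero _
      simp only [Pi.add_apply, Pi.smul_apply, smul_eq_mul, hcex, evalMonomial_eq]
      norm_num [zpow_ofNat]
      try field_simp
      try ring
    have hzs : (Finset.univ.filter fun p : Fˣ × Fˣ => cex p = 0)
        = ({x, y, z} : Finset Fˣ) ×ˢ Finset.univ := by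
      ext p
      simp only [Finset.mem_filter, Finset.mem_univ, true_and, Finset.mem_product,
        Finset.mem_insert, Finset.mem_singleton, and_true, hcex]
      rw [mul_eq_zero, mul_eq_zero, mul_eq_zero, inv_eq_zero, sub_eq_zero, sub_eq_zero,
        sub_eq_zero]
      constructor
      · rintro (h | (h | h) | h)
        · exact absurd h (Units.ne_zero _)
        · simp [Units.ext h]
        · simp [Units.ext h]
        · simp [Units.ext h]
      · rintro (h | h | h) <;> subst h <;> simp
    have hzcard : (Finset.univ.filter fun p : Fˣ × Fˣ => cex p = 0).card = 3 * N := by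
      rw [hzs, Finset.card_product, Finset.card_univ]
      have h3 : ({x, y, z} : Finset Fˣ).card = 3 := by
        rw [Finset.card_insert_of_notMem (by simp [hxy, hxz]),
          Finset.card_insert_of_notMem (by simp [hyz]), Finset.card_singleton]
      rw [h3]
    have hwt : hammingWt cex = N * N - 3 * N := by
      rw [hammingWt_eq, hzcard]
    refine ⟨cex, hmem, ?_, hwt⟩
    intro h0
    rw [h0] at hwt
    have : hammingWt (0 : (Fˣ × Fˣ) → F) = 0 := by simp [hammingWt]
    omega
  · intro c hc hcne
    rw [tcode8, mem_span_six] at hc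
    obtain ⟨a0, a1, a2, a3, a4, a5, rfl⟩ := hc
    set c : (Fˣ × Fˣ) → F := a0 • evalMonomial (-1,0) + a1 • evalMonomial (0,-1) + a2 • evalMonomial (0,0) + a3 • evalMonomial (0,1) + a4 • evalMonomial (1,0) + a5 • evalMonomial (2,0) with hcdef
    have hrep : ∀ p : Fˣ × Fˣ, c p = a0 * ((p.1 : F))⁻¹ + a1 * ((p.2 : F))⁻¹ + a2 + a3 * (p.2 : F) + a4 * (p.1 : F) + a5 * (p.1 : F) ^ 2 := by
      intro p
      simp only [hcdef, Pi.add_apply, Pi.smul_apply, smul_eq_mul, evalMonomial_eq]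
      norm_num [zpow_ofNat]
      try ring
    rw [hammingWt_eq]
    have hbound : (Finset.univ.filter fun p : Fˣ × Fˣ => c p = 0).card ≤ 3 * N := by
      by_cases h02 : a1 = 0 ∧ a3 = 0
      · set P : Polynomial F := C a5 * X ^ 3 + C a4 * X ^ 2 + C a2 * X + C a0
          with hPdef
        have key0 : ∀ p : Fˣ × Fˣ, (c p = 0 ↔ P.eval (p.1 : F) = 0) := by
          intro p
          have h1 : ((p.1 : F)) ≠ 0 := Units.ne_zero _
          have hmul : P.eval (p.1 : F) = (p.1 : F) * c p := by
            rw [hrep p, h02.1, h02.2, hPdef]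
            simp only [eval_add, eval_mul, eval_pow, eval_C, eval_X]
            field_simp
            ring
          rw [hmul, mul_eq_zero]
          tauto
        have hP : P ≠ 0 := by
          intro hP0
          refine hcne (funext fun p => ?_)
          have := (key0 p).mpr (by rw [hP0, eval_zero])
          simpa using this
        have e1 : (Finset.univ.filter fun p : Fˣ × Fˣ => c p = 0)
            = Finset.univ.filter fun p : Fˣ × Fˣ => P.eval (p.1 : F) = 0 :=
          Finset.filter_congr fun p _ => key0 p
        have e2 : (Finset.univ.filter fun p : Fˣ × Fˣ => P.eval (p.1 : F) = 0).card
            = (Finset.univ.filter fun p : Fˣ × Fˣ => P.eval (p.2 : F) = 0).card :=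
          filter_card_equiv (Equiv.prodComm Fˣ Fˣ) (fun p : Fˣ × Fˣ => P.eval (p.2 : F) = 0)
        rw [e1, e2]
        have hb := zeros_bound (fun p : Fˣ × Fˣ => P.eval (p.2 : F)) ∅ 3
          (fun t _ => units_root_card_le P hP 3 natDegree_cubic_le)
        simpa using hb
      · have h02' : a1 ≠ 0 ∨ a3 ≠ 0 := by tauto
        set Q : F → Polynomial F := fun u => C a3 * X ^ 2 + C (a0 * u⁻¹ + a2 + a4 * u + a5 * u ^ 2) * X + C a1 with hQdef
        have key : ∀ p : Fˣ × Fˣ, (c p = 0 ↔ (Q (p.1 : F)).eval (p.2 : F) = 0) := by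
          intro p
          have h1 : ((p.1 : F)) ≠ 0 := Units.ne_zero _
          have h2 : ((p.2 : F)) ≠ 0 := Units.ne_zero _
          have hmul : (Q (p.1 : F)).eval (p.2 : F) = (p.2 : F) * c p := by
            rw [hrep p, hQdef]
            simp only [eval_add, eval_mul, eval_pow, eval_C, eval_X]
            field_simp
            ring
          rw [hmul, mul_eq_zero]
          tauto
        have e1 : (Finset.univ.filter fun p : Fˣ × Fˣ => c p = 0)
            = Finset.univ.filter fun p : Fˣ × Fˣ => (Q (p.1 : F)).eval (p.2 : F) = 0 :=
          Finset.filter_congr fun p _ => key p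
        rw [e1]
        have hQne : ∀ t : Fˣ, Q (t : F) ≠ 0 := by
          intro t
          rw [hQdef]
          refine quad_ne_zero _ _ _ ?_
          rcases h02' with h | h
          · exact Or.inr h
          · exact Or.inl h
        have hb := zeros_bound (fun p : Fˣ × Fˣ => (Q (p.1 : F)).eval (p.2 : F)) ∅ 2
          (fun t _ => units_root_card_le (Q (t : F)) (hQne t) 2 natDegree_quadratic_le)
        simp only [Finset.card_empty, Nat.zero_add] at hb
        exact hb.trans (by omega)
    exact Nat.sub_le_sub_left hbound _


open scoped Classical in
lemma tcode6 {F : Type} [Field F] [Fintype F] :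
    toricCode F (latticePts (P6 6)) = Submodule.span F
      ({evalMonomial (0,0), evalMonomial (0,1), evalMonomial (1,0), evalMonomial (1,1), evalMonomial (2,2), evalMonomial (3,3)} : Set ((Fˣ × Fˣ) → F)) := by
  rw [toricCode, lp6]
  congr 1
  simp [Set.image_insert_eq]


open Polynomial in
open scoped Classical in
lemma case6 {F : Type} [Field F] [Fintype F] (h9 : 9 ≤ Fintype.card F) :
    minDist (toricCode F (latticePts (P6 6)))
      = (Fintype.card F - 1) * (Fintype.card F - 1) - 3 * (Fintype.card F - 1) := by
  classical
  have hNu : Fintype.card Fˣ = Fintype.card F - 1 := Fintype.card_units F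
  rw [← hNu]
  set N := Fintype.card Fˣ with hNdef
  have hN : 8 ≤ N := by
    rw [hNdef, Fintype.card_units]; omega
  have hNN : 8 * N ≤ N * N := Nat.mul_le_mul_right N hN
  apply minDist_eq
  · obtain ⟨t3, ht3sub, ht3card⟩ :=
      Finset.exists_subset_card_eq (show 3 ≤ (Finset.univ : Finset Fˣ).card by
        simpa using by omega)
    obtain ⟨x, y, z, hxy, hxz, hyz, rfl⟩ := Finset.card_eq_three.mp ht3card
    set cex : (Fˣ × Fˣ) → F :=
      fun p => ((p.1 : F) * (p.2 : F) - ↑x) * ((p.1 : F) * (p.2 : F) - ↑y) * ((p.1 : F) * (p.2 : F) - ↑z) with hcex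
    have hmem : cex ∈ toricCode F (latticePts (P6 6)) := by
      rw [tcode6, mem_span_six]
      refine ⟨-(↑x * ↑y * ↑z), 0, 0, ↑x * ↑y + ↑x * ↑z + ↑y * ↑z, -(↑x + ↑y + ↑z), 1, ?_⟩
      funext p
      simp only [Pi.add_apply, Pi.smul_apply, smul_eq_mul, hcex, evalMonomial_eq]
      norm_num [zpow_ofNat]
      try field_simp
      try ring
    have hzs : (Finset.univ.filter fun p : Fˣ × Fˣ => cex p = 0)
        = (Finset.univ.filter fun p : Fˣ × Fˣ => p.1 * p.2 ∈ ({x, y, z} : Finset Fˣ)) := by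
      ext p
      simp only [Finset.mem_filter, Finset.mem_univ, true_and, hcex,
        Finset.mem_insert, Finset.mem_singleton]
      rw [mul_eq_zero, mul_eq_zero, sub_eq_zero, sub_eq_zero, sub_eq_zero]
      constructor
      · rintro ((h | h) | h)
        · exact Or.inl (Units.ext (by rw [Units.val_mul]; exact h))
        · exact Or.inr (Or.inl (Units.ext (by rw [Units.val_mul]; exact h)))
        · exact Or.inr (Or.inr (Units.ext (by rw [Units.val_mul]; exact h)))
      · rintro (h | h | h) <;>
          [exact Or.inl (Or.inl (by rw [← Units.val_mul, h])) ;
           exact Or.inl (Or.inr (by rw [← Units.val_mul, h])) ;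
           exact Or.inr (by rw [← Units.val_mul, h])]
    have hzcard : (Finset.univ.filter fun p : Fˣ × Fˣ => cex p = 0).card = 3 * N := by
      rw [hzs]
      have hcnt : (Finset.univ.filter fun p : Fˣ × Fˣ =>
            p.1 * p.2 ∈ ({x, y, z} : Finset Fˣ)).card
          = (Finset.univ.filter fun p : Fˣ × Fˣ => p.2 ∈ ({x, y, z} : Finset Fˣ)).card := by
        refine Finset.card_bij (fun p _ => (p.1, p.1 * p.2)) ?_ ?_ ?_
        · intro p hp
          simp only [Finset.mem_filter, Finset.mem_univ, true_and] at hp ⊢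
          exact hp
        · intro p hp q hq hpq
          simp only [Prod.mk.injEq] at hpq
          obtain ⟨h1, h2⟩ := hpq
          rw [h1] at h2
          exact Prod.ext h1 (mul_left_cancel h2)
        · intro b hb
          simp only [Finset.mem_filter, Finset.mem_univ, true_and] at hb ⊢
          refine ⟨(b.1, b.1⁻¹ * b.2), ?_, ?_⟩
          · simpa [mul_inv_cancel_left] using hb
          · simp [mul_inv_cancel_left]
      rw [hcnt]
      have hprod : (Finset.univ.filter fun p : Fˣ × Fˣ => p.2 ∈ ({x, y, z} : Finset Fˣ))
          = Finset.univ ×ˢ ({x, y, z} : Finset Fˣ) := by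
        ext p
        simp [Finset.mem_product]
      rw [hprod, Finset.card_product, Finset.card_univ]
      have h3 : ({x, y, z} : Finset Fˣ).card = 3 := by
        rw [Finset.card_insert_of_notMem (by simp [hxy, hxz]),
          Finset.card_insert_of_notMem (by simp [hyz]), Finset.card_singleton]
      rw [h3, Nat.mul_comm]
    have hwt : hammingWt cex = N * N - 3 * N := by
      rw [hammingWt_eq, hzcard]
    refine ⟨cex, hmem, ?_, hwt⟩
    intro h0
    rw [h0] at hwt
    have : hammingWt (0 : (Fˣ × Fˣ) → F) = 0 := by simp [hammingWt]
    omega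
  · intro c hc hcne
    rw [tcode6, mem_span_six] at hc
    obtain ⟨a0, a1, a2, a3, a4, a5, rfl⟩ := hc
    set c : (Fˣ × Fˣ) → F := a0 • evalMonomial (0,0) + a1 • evalMonomial (0,1) + a2 • evalMonomial (1,0) + a3 • evalMonomial (1,1) + a4 • evalMonomial (2,2) + a5 • evalMonomial (3,3) with hcdef
    have hrep : ∀ p : Fˣ × Fˣ, c p = a0 + a1 * (p.2 : F) + a2 * (p.1 : F) + a3 * (p.1 : F) * (p.2 : F) + a4 * (p.1 : F) ^ 2 * (p.2 : F) ^ 2 + a5 * (p.1 : F) ^ 3 * (p.2 : F) ^ 3 := by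
      intro p
      simp only [hcdef, Pi.add_apply, Pi.smul_apply, smul_eq_mul, evalMonomial_eq]
      norm_num [zpow_ofNat]
      try ring
    rw [hammingWt_eq]
    have hbound : (Finset.univ.filter fun p : Fˣ × Fˣ => c p = 0).card ≤ 3 * N := by
      by_cases h45 : a4 = 0 ∧ a5 = 0
      · by_cases h13 : a1 = 0 ∧ a3 = 0
        · set P : Polynomial F := C a2 * X + C a0 with hPdef
          have hev : ∀ p : Fˣ × Fˣ, c p = P.eval (p.1 : F) := by
            intro p
            rw [hrep p, h45.1, h45.2, h13.1, h13.2]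
            simp only [hPdef, eval_add, eval_mul, eval_C, eval_X]
            ring
          have hP : P ≠ 0 := by
            intro hP0
            exact hcne (funext fun p => by rw [hev p, hP0, eval_zero, Pi.zero_apply])
          have e1 : (Finset.univ.filter fun p : Fˣ × Fˣ => c p = 0)
              = Finset.univ.filter fun p : Fˣ × Fˣ => P.eval (p.1 : F) = 0 :=
            Finset.filter_congr fun p _ => by rw [hev p]
          have e2 : (Finset.univ.filter fun p : Fˣ × Fˣ => P.eval (p.1 : F) = 0).card
              = (Finset.univ.filter fun p : Fˣ × Fˣ => P.eval (p.2 : F) = 0).card :=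
            filter_card_equiv (Equiv.prodComm Fˣ Fˣ)
              (fun p : Fˣ × Fˣ => P.eval (p.2 : F) = 0)
          rw [e1, e2]
          have hb := zeros_bound (fun p : Fˣ × Fˣ => P.eval (p.2 : F)) ∅ 3
            (fun t _ => units_root_card_le P hP 3 (natDegree_linear_le.trans (by norm_num)))
          simpa using hb
        · have h13' : a1 ≠ 0 ∨ a3 ≠ 0 := by tauto
          set R : F → Polynomial F :=
            fun u => C (a1 + a3 * u) * X + C (a0 + a2 * u) with hRdef
          have hev : ∀ p : Fˣ × Fˣ, c p = (R (p.1 : F)).eval (p.2 : F) := by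
            intro p
            rw [hrep p, h45.1, h45.2, hRdef]
            simp only [eval_add, eval_mul, eval_C, eval_X]
            ring
          have e1 : (Finset.univ.filter fun p : Fˣ × Fˣ => c p = 0)
              = Finset.univ.filter fun p : Fˣ × Fˣ => (R (p.1 : F)).eval (p.2 : F) = 0 :=
            Finset.filter_congr fun p _ => by rw [hev p]
          rw [e1]
          set T0 : Finset Fˣ :=
            Finset.univ.filter fun t : Fˣ => (C a3 * X + C a1).eval (t : F) = 0 with hT0def
          have hT0 : T0.card ≤ 1 :=
            units_root_card_le _ (lin_ne_zero a3 a1 (Or.symm h13')) 1 natDegree_linear_le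
          have hb := zeros_bound (fun p : Fˣ × Fˣ => (R (p.1 : F)).eval (p.2 : F)) T0 1 ?_
          · refine hb.trans (Nat.mul_le_mul_right N (by omega))
          · intro t ht
            rw [hT0def] at ht
            simp only [Finset.mem_filter, Finset.mem_univ, true_and, eval_add, eval_mul,
              eval_C, eval_X] at ht
            refine units_root_card_le (R (t : F))
              (lin_ne_zero _ _ (Or.inl fun hh => ht ?_)) 1 natDegree_linear_le
            linear_combination hh
      · have h45' : a4 ≠ 0 ∨ a5 ≠ 0 := by tauto
        set Qc : F → Polynomial F := fun u => C (a5 * u ^ 3) * X ^ 3 + C (a4 * u ^ 2) * X ^ 2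
            + C (a1 + a3 * u) * X + C (a0 + a2 * u) with hQdef
        have hev : ∀ p : Fˣ × Fˣ, c p = (Qc (p.1 : F)).eval (p.2 : F) := by
          intro p
          rw [hrep p, hQdef]
          simp only [eval_add, eval_mul, eval_pow, eval_C, eval_X]
          ring
        have e1 : (Finset.univ.filter fun p : Fˣ × Fˣ => c p = 0)
            = Finset.univ.filter fun p : Fˣ × Fˣ => (Qc (p.1 : F)).eval (p.2 : F) = 0 :=
          Finset.filter_congr fun p _ => by rw [hev p]
        rw [e1]
        have hQne : ∀ t : Fˣ, Qc (t : F) ≠ 0 := by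
          intro t
          rw [hQdef]
          refine cubic_ne_zero _ _ _ _ ?_
          rcases h45' with h | h
          · exact Or.inr (mul_ne_zero h (pow_ne_zero 2 (Units.ne_zero t)))
          · exact Or.inl (mul_ne_zero h (pow_ne_zero 3 (Units.ne_zero t)))
        have hb := zeros_bound (fun p : Fˣ × Fˣ => (Qc (p.1 : F)).eval (p.2 : F)) ∅ 3
          (fun t _ => units_root_card_le (Qc (t : F)) (hQne t) 3 natDegree_cubic_le)
        simpa using hb
    exact Nat.sub_le_sub_left hbound _

/-- for every prime power `q ≥ 9` and `4 ≤ i ≤ 8`, the minimum distance of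
`C_{P₆⁽ⁱ⁾}` over `𝔽_q` equals `(q-1)² − 3(q-1)`. -/
theorem minDist_P6_4_to_8 (q : ℕ) (hq : IsPrimePow q) (hq9 : 9 ≤ q)
    (F : Type) [Field F] [Fintype F] (hF : Fintype.card F = q)
    (i : ℕ) (h4 : 4 ≤ i) (h8 : i ≤ 8) :
    (minDist (toricCode F (latticePts (P6 i))) : ℤ)
      = ((q:ℤ) - 1)^2 - 3 * ((q:ℤ) - 1) := by
  classical
  have h9 : 9 ≤ Fintype.card F := by rw [hF]; exact hq9
  have hNq : Fintype.card F - 1 = q - 1 := by rw [hF]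
  interval_cases i
  · rw [case4 h9]; exact final_cast q hq9 _ hNq
  · rw [case5 h9]; exact final_cast q hq9 _ hNq
  · rw [case6 h9]; exact final_cast q hq9 _ hNq
  · rw [case7 h9]; exact final_cast q hq9 _ hNq
  · rw [case8 h9]; exact final_cast q hq9 _ hNq
end

section
/- For every prime power q ≥ 5, the number of codewords of the toric code C_{P_6^(3)} over 𝔽_q having Hamming weight exactly (q-1)² − 2(q-1) equals 4·binom(q-1,2)·(q-1) = 2(q-1)²(q-2), where P_6^(3) = conv{(0,0),(3,0),(1,1),(0,1)}. -/
set_option linter.unusedSectionVars false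
set_option linter.unusedVariables false

open Polynomial Finset
lemma imageV : toRealPt '' ((P6 3 : Finset (ℤ×ℤ)) : Set (ℤ×ℤ))
    = ({((0:ℝ),(0:ℝ)),(3,0),(1,1),(0,1)} : Set (ℝ×ℝ)) := by
  show toRealPt '' (({(0,0),(3,0),(1,1),(0,1)} : Finset (ℤ×ℤ)) : Set (ℤ×ℤ)) = _
  simp [Set.image_insert_eq, toRealPt]

lemma lattice_P63 : latticePts (P6 3) =
    ({((0:ℤ),(0:ℤ)),(1,0),(2,0),(3,0),(0,1),(1,1)} : Set (ℤ×ℤ)) := by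
  ext p
  constructor
  · intro hp
    have hp' : toRealPt p ∈ convexHull ℝ ({((0:ℝ),(0:ℝ)),(3,0),(1,1),(0,1)} : Set (ℝ×ℝ)) := by
      rw [← imageV]; exact hp
    have h1 : (0:ℝ) ≤ (p.2 : ℝ) := by
      have : toRealPt p ∈ {z : ℝ×ℝ | 0 ≤ z.2} := by
        refine convexHull_min ?_ (convex_halfSpace_ge ⟨fun a b => rfl, fun c a => rfl⟩ 0) hp'
        rintro z (rfl|rfl|rfl|rfl) <;> norm_num
      exact this
    have h2 : (p.2 : ℝ) ≤ 1 := by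
      have : toRealPt p ∈ {z : ℝ×ℝ | z.2 ≤ 1} := by
        refine convexHull_min ?_ (convex_halfSpace_le ⟨fun a b => rfl, fun c a => rfl⟩ 1) hp'
        rintro z (rfl|rfl|rfl|rfl) <;> norm_num
      exact this
    have h3 : (0:ℝ) ≤ (p.1 : ℝ) := by
      have : toRealPt p ∈ {z : ℝ×ℝ | 0 ≤ z.1} := by
        refine convexHull_min ?_ (convex_halfSpace_ge ⟨fun a b => rfl, fun c a => rfl⟩ 0) hp'
        rintro z (rfl|rfl|rfl|rfl) <;> norm_num
      exact this
    have h4 : (p.1 : ℝ) + 2 * (p.2 : ℝ) ≤ 3 := by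
      have : toRealPt p ∈ {z : ℝ×ℝ | z.1 + 2 * z.2 ≤ 3} := by
        refine convexHull_min ?_
          (convex_halfSpace_le ⟨fun a b => by simp; ring, fun c a => by simp; ring⟩ 3) hp'
        rintro z (rfl|rfl|rfl|rfl) <;> norm_num
      exact this
    have i1 : (0:ℤ) ≤ p.2 := by exact_mod_cast h1
    have i2 : p.2 ≤ 1 := by exact_mod_cast h2
    have i3 : (0:ℤ) ≤ p.1 := by exact_mod_cast h3
    have i4 : p.1 + 2 * p.2 ≤ 3 := by exact_mod_cast h4
    have := p.1; have := p.2
    simp only [Set.mem_insert_iff, Set.mem_singleton_iff, Prod.ext_iff]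
    obtain ⟨x, y⟩ := p
    simp only at i1 i2 i3 i4 ⊢
    omega
  · intro hp
    show toRealPt p ∈ convexHull ℝ _
    rw [imageV]
    have hv : ∀ z ∈ ({((0:ℝ),(0:ℝ)),(3,0),(1,1),(0,1)} : Set (ℝ×ℝ)),
        z ∈ convexHull ℝ ({((0:ℝ),(0:ℝ)),(3,0),(1,1),(0,1)} : Set (ℝ×ℝ)) :=
      fun z hz => subset_convexHull ℝ _ hz
    have hcx := convex_convexHull ℝ ({((0:ℝ),(0:ℝ)),(3,0),(1,1),(0,1)} : Set (ℝ×ℝ))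
    rcases hp with rfl|rfl|rfl|rfl|rfl|rfl
    · exact hv _ (by simp [toRealPt, Prod.ext_iff])
    · -- (1,0) = 2/3 (0,0) + 1/3 (3,0)
      have := hcx (hv ((0:ℝ),(0:ℝ)) (by simp)) (hv ((3:ℝ),(0:ℝ)) (by simp))
        (by norm_num : (0:ℝ) ≤ 2/3) (by norm_num : (0:ℝ) ≤ 1/3) (by norm_num)
      convert this using 1
      simp only [toRealPt, Prod.ext_iff, Prod.smul_mk, Prod.mk_add_mk, smul_eq_mul]
      norm_num
    · have := hcx (hv ((0:ℝ),(0:ℝ)) (by simp)) (hv ((3:ℝ),(0:ℝ)) (by simp))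
        (by norm_num : (0:ℝ) ≤ 1/3) (by norm_num : (0:ℝ) ≤ 2/3) (by norm_num)
      convert this using 1
      simp only [toRealPt, Prod.ext_iff, Prod.smul_mk, Prod.mk_add_mk, smul_eq_mul]
      norm_num
    · exact hv _ (by simp [toRealPt, Prod.ext_iff])
    · exact hv _ (by simp [toRealPt, Prod.ext_iff])
    · exact hv _ (by simp [toRealPt, Prod.ext_iff])

open Polynomial in
lemma span_char {F : Type} [Field F] (c : (Fˣ × Fˣ) → F) :
    c ∈ Submodule.span F ((fun m => evalMonomial m) ''
        ({((0:ℤ),(0:ℤ)),(1,0),(2,0),(3,0),(0,1),(1,1)} : Set (ℤ×ℤ))) ↔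
    ∃ g h : F[X], g.natDegree ≤ 3 ∧ h.natDegree ≤ 1 ∧
      c = fun t => g.eval ↑t.1 + ↑t.2 * h.eval ↑t.1 := by
  set v : Fin 6 → ((Fˣ × Fˣ) → F) := ![evalMonomial ((0:ℤ),(0:ℤ)), evalMonomial (1,0),
      evalMonomial (2,0), evalMonomial (3,0), evalMonomial ((0:ℤ),(1:ℤ)), evalMonomial (1,1)]
    with hv
  have hsum : ∀ (a : Fin 6 → F) (t : Fˣ × Fˣ), (∑ i, a i • v i) t =
      a 0 + a 1 * ↑t.1 + a 2 * (↑t.1:F)^2 + a 3 * (↑t.1:F)^3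
        + (↑t.2:F) * (a 4 + a 5 * ↑t.1) := by
    intro a t
    have e0 : v 0 t = 1 := by simp [hv, evalMonomial]
    have e1 : v 1 t = ↑t.1 := by show evalMonomial (1,0) t = _; simp [evalMonomial]
    have e2 : v 2 t = (↑t.1:F)^2 := by
      show evalMonomial (2,0) t = _
      simp [evalMonomial]
    have e3 : v 3 t = (↑t.1:F)^3 := by
      show evalMonomial (3,0) t = _
      simp [evalMonomial]
    have e4 : v 4 t = ↑t.2 := by show evalMonomial ((0:ℤ),(1:ℤ)) t = _; simp [evalMonomial]
    have e5 : v 5 t = ↑t.1 * ↑t.2 := by show evalMonomial (1,1) t = _; simp [evalMonomial]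
    simp only [Finset.sum_apply, Pi.smul_apply, smul_eq_mul, Fin.sum_univ_six,
      e0, e1, e2, e3, e4, e5]
    ring
  have himg : (fun m => evalMonomial m) ''
        ({((0:ℤ),(0:ℤ)),(1,0),(2,0),(3,0),(0,1),(1,1)} : Set (ℤ×ℤ)) = Set.range v := by
    rw [hv]
    simp only [Set.image_insert_eq, Set.image_singleton, Matrix.range_cons,
      Matrix.range_empty, Set.union_empty, Set.singleton_union]
  rw [himg, Submodule.mem_span_range_iff_exists_fun]
  constructor
  · rintro ⟨a, rfl⟩
    refine ⟨C (a 0) + C (a 1) * X + C (a 2) * X^2 + C (a 3) * X^3,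
      C (a 4) + C (a 5) * X, ?_, ?_, ?_⟩
    · compute_degree
    · compute_degree
    · funext t
      rw [hsum]
      simp
  · rintro ⟨g, h, hg, hh, rfl⟩
    refine ⟨![g.coeff 0, g.coeff 1, g.coeff 2, g.coeff 3, h.coeff 0, h.coeff 1], ?_⟩
    funext t
    rw [hsum]
    have hge : g.eval (↑t.1 : F) = ∑ i ∈ Finset.range 4, g.coeff i * (↑t.1:F)^i :=
      g.eval_eq_sum_range' (lt_of_le_of_lt hg (by norm_num)) _
    have hhe : h.eval (↑t.1 : F) = ∑ i ∈ Finset.range 2, h.coeff i * (↑t.1:F)^i :=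
      h.eval_eq_sum_range' (lt_of_le_of_lt hh (by norm_num)) _
    simp only [show (![g.coeff 0, g.coeff 1, g.coeff 2, g.coeff 3, h.coeff 0, h.coeff 1] :
        Fin 6 → F) 5 = h.coeff 1 from rfl, show (![g.coeff 0, g.coeff 1, g.coeff 2, g.coeff 3,
        h.coeff 0, h.coeff 1] : Fin 6 → F) 4 = h.coeff 0 from rfl]
    simp [hge, hhe, Finset.sum_range_succ]



section WT
variable {F : Type} [Field F] [Fintype F] [DecidableEq F]

noncomputable def wtF (c : (Fˣ × Fˣ) → F) : ℕ := (univ.filter fun t => c t ≠ 0).card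

lemma wtF_eq (c : (Fˣ × Fˣ) → F) : Set.ncard {x | c x ≠ 0} = wtF c := by
  classical
  rw [wtF, ← Set.ncard_coe_finset]
  congr 1
  ext t
  simp

noncomputable def rootsU (g : F[X]) : Finset Fˣ := univ.filter fun u => g.eval ↑u = 0

lemma card_units' : Fintype.card Fˣ = Fintype.card F - 1 := Fintype.card_units (α := F)

-- Case h = 0 : weight of pure-x codeword
lemma wt_psi (g : F[X]) :
    wtF (fun t : Fˣ × Fˣ => g.eval ↑t.1) = (Fintype.card Fˣ - (rootsU g).card) * Fintype.card Fˣ := by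
  classical
  have : (univ.filter fun t : Fˣ × Fˣ => g.eval ↑t.1 ≠ 0)
      = (univ.filter fun u : Fˣ => g.eval ↑u ≠ 0) ×ˢ univ := by
    ext t; simp
  rw [wtF, this, Finset.card_product, Finset.card_univ]
  congr 1
  have h2 := Finset.card_filter_add_card_filter_not (s := (univ : Finset Fˣ))
    (p := fun u => g.eval ↑u = 0)
  have h3 : (univ : Finset Fˣ).card = Fintype.card Fˣ := Finset.card_univ
  simp only [ne_eq] at h2 ⊢
  rw [rootsU]
  omega

-- zero count
lemma zeros_bound_s15 (g h : F[X]) (hh : h ≠ 0) (hd : h.natDegree ≤ 1) :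
    (univ.filter fun t : Fˣ × Fˣ => g.eval ↑t.1 + ↑t.2 * h.eval ↑t.1 = 0).card
      ≤ 2 * Fintype.card Fˣ - 1 := by
  classical
  set n := Fintype.card Fˣ with hn
  have hn1 : 1 ≤ n := Fintype.card_pos
  set Z := univ.filter fun t : Fˣ × Fˣ => g.eval ↑t.1 + ↑t.2 * h.eval ↑t.1 = 0 with hZ
  set Rh : Finset Fˣ := univ.filter fun u => h.eval ↑u = 0 with hRh
  have hRh1 : Rh.card ≤ 1 := by
    calc Rh.card ≤ h.roots.toFinset.card := by
          refine Finset.card_le_card_of_injOn (fun u => (u : F)) ?_ ?_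
          · intro u hu
            simp only [hRh, Finset.mem_coe, mem_filter] at hu
            simp [Multiset.mem_toFinset, mem_roots, hh, hu.2]
          · intro a _ b _ hab; exact Units.ext hab
      _ ≤ Multiset.card h.roots := h.roots.toFinset_card_le
      _ ≤ h.natDegree := h.card_roots'
      _ ≤ 1 := hd
  -- fiberwise count
  have hfib := Finset.card_eq_sum_card_fiberwise
    (f := fun t : Fˣ × Fˣ => t.1) (s := Z) (t := univ) (fun t _ => mem_univ _)
  have hbound : ∀ u : Fˣ, (Z.filter fun t => t.1 = u).card ≤ if u ∈ Rh then n else 1 := by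
    intro u
    by_cases hu : u ∈ Rh
    · simp only [hu, if_pos]
      calc (Z.filter fun t => t.1 = u).card ≤ ({u} ×ˢ univ : Finset (Fˣ × Fˣ)).card := by
            apply Finset.card_le_card
            intro t ht
            simp only [mem_filter] at ht
            simp only [Finset.mem_product, Finset.mem_singleton, Finset.mem_univ, and_true]
            exact ht.2
        _ = n := by rw [Finset.card_product, Finset.card_singleton, Finset.card_univ, one_mul]
    · simp only [hu, if_neg, not_false_iff]
      apply Finset.card_le_one.2
      intro t1 ht1 t2 ht2
      simp only [hZ, mem_filter, mem_univ, true_and] at ht1 ht2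
      obtain ⟨⟨e1, f1⟩, ⟨e2, f2⟩⟩ := ht1, ht2
      have hy : (t1.2 : F) = t2.2 := by
        have hne : h.eval (↑u : F) ≠ 0 := by
          simp only [hRh, mem_filter, mem_univ, true_and] at hu
          exact hu
        rw [f1] at e1; rw [f2] at e2
        have h2 : (t1.2 : F) * h.eval ↑u = (t2.2:F) * h.eval ↑u :=
          add_left_cancel (e1.trans e2.symm)
        exact mul_right_cancel₀ hne h2
      have : t1.2 = t2.2 := Units.ext hy
      have hp1 : t1 = (u, t1.2) := Prod.ext f1 rfl
      have hp2 : t2 = (u, t2.2) := Prod.ext f2 rfl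
      rw [hp1, hp2, this]
  calc Z.card = ∑ u : Fˣ, (Z.filter fun t => t.1 = u).card := hfib
    _ ≤ ∑ u : Fˣ, (if u ∈ Rh then n else 1) := Finset.sum_le_sum (fun u _ => hbound u)
    _ = Rh.card * n + (n - Rh.card) * 1 := by
        rw [Finset.sum_ite, Finset.sum_const, Finset.sum_const]
        have e1 : (univ.filter fun u => u ∈ Rh) = Rh := by
          ext u; simp
        have e2 : (univ.filter fun u => ¬ u ∈ Rh) = univ \ Rh := by
          ext u; simp
        rw [e1, e2, Finset.card_sdiff_of_subset (Finset.subset_univ _), Finset.card_univ]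
        simp [hn, mul_comm]
    _ ≤ 2 * n - 1 := by
        interval_cases hc : Rh.card
        · omega
        · omega

end WT


section CNT
variable {F : Type} [Field F] [Fintype F] [DecidableEq F]

noncomputable def allowedCD (e : Finset Fˣ) : Finset (F × F) :=
  univ.filter fun p => ¬(p.1 = 0 ∧ p.2 = 0) ∧ ∀ u : Fˣ, p.1 * ↑u + p.2 = 0 → u ∈ e

noncomputable def Param (F : Type) [Field F] [Fintype F] [DecidableEq F] :
    Finset ((Finset Fˣ) × F × F) :=
  ((univ.powersetCard 2) ×ˢ (univ : Finset (F × F))).filter fun x => x.2 ∈ allowedCD x.1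

noncomputable def Theta (x : (Finset Fˣ) × F × F) : F[X] :=
  (∏ u ∈ x.1, (X - C (u:F))) * (C x.2.2 + C x.2.1 * X)

lemma card_allowedCD (e : Finset Fˣ) (he : e.card = 2) :
    (allowedCD e).card = 4 * Fintype.card Fˣ := by
  classical
  rw [Finset.card_eq_sum_card_fiberwise
    (f := fun p : F × F => p.1) (t := univ) (fun p _ => mem_univ _)]
  have key : ∀ c : F, ((allowedCD e).filter fun p => p.1 = c).card
      = if c = 0 then Fintype.card Fˣ else 3 := by
    intro c
    by_cases hc : c = 0
    · subst hc
      simp only [if_pos]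
      have : ((allowedCD e).filter fun p => p.1 = 0)
          = Finset.image (fun d => ((0:F), d)) (univ.erase 0) := by
        ext p
        simp only [allowedCD, mem_filter, mem_univ, true_and, Finset.mem_image,
          Finset.mem_erase, mem_univ, and_true]
        constructor
        · rintro ⟨⟨h1, _⟩, h2⟩
          exact ⟨p.2, by tauto, by rw [← h2]⟩
        · rintro ⟨d, hd, rfl⟩
          refine ⟨⟨by tauto, ?_⟩, rfl⟩
          intro u hu
          simp only [zero_mul, zero_add] at hu
          exact absurd hu hd
      rw [this, Finset.card_image_of_injective _ (fun a b hab => (Prod.ext_iff.1 hab).2)]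
      rw [Finset.card_erase_of_mem (mem_univ _), Finset.card_univ]
      exact (Fintype.card_units (α := F)).symm
    · simp only [if_neg hc]
      have himg : ((allowedCD e).filter fun p => p.1 = c)
          = Finset.image (fun d => (c, d)) (insert (0:F) (e.image fun u => -(c * ↑u))) := by
        ext p
        simp only [allowedCD, mem_filter, mem_univ, true_and, Finset.mem_image,
          Finset.mem_insert]
        constructor
        · rintro ⟨⟨_, h2⟩, h3⟩
          refine ⟨p.2, ?_, by rw [← h3]⟩
          by_cases hp2 : p.2 = 0
          · left; exact hp2
          · right
            have hu : IsUnit (-(p.2) / c) := by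
              apply isUnit_iff_ne_zero.2
              intro h0
              apply hp2
              field_simp at h0
              simpa using h0
            obtain ⟨u, hu⟩ := hu
            refine ⟨u, h2 u ?_, ?_⟩
            · rw [h3, hu]; field_simp; ring
            · rw [hu]; field_simp
        · rintro ⟨d, hd, rfl⟩
          refine ⟨⟨by tauto, ?_⟩, rfl⟩
          intro u hu
          rcases hd with rfl | ⟨w, hw, rfl⟩
          · exfalso
            rw [add_zero] at hu
            rcases mul_eq_zero.1 hu with h | h
            · exact hc h
            · exact u.ne_zero h
          · have : (u:F) = w := by
              have h1 : c * ↑u = c * ↑w := by linear_combination hu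
              exact mul_left_cancel₀ hc h1
            rwa [show u = w from Units.ext this]
      rw [himg, Finset.card_image_of_injective _
        (fun a b hab => (Prod.ext_iff.1 hab).2)]
      rw [Finset.card_insert_of_notMem, Finset.card_image_of_injOn]
      · rw [he]
      · intro a _ b _ hab
        have : (a:F) = b := mul_left_cancel₀ hc (neg_injective hab)
        exact Units.ext this
      · intro h0
        obtain ⟨u, _, hu⟩ := Finset.mem_image.1 h0
        have : c * ↑u = 0 := by linear_combination -hu
        rcases mul_eq_zero.1 this with h | h
        · exact hc h
        · exact u.ne_zero h
  simp only [key]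
  rw [Finset.sum_ite, Finset.sum_const, Finset.sum_const]
  have e1 : (univ.filter fun c : F => c = 0) = {0} := by ext c; simp
  have e2 : (univ.filter fun c : F => ¬ c = 0) = univ.erase 0 := by ext c; simp
  rw [e1, e2, Finset.card_singleton, Finset.card_erase_of_mem (mem_univ _), Finset.card_univ]
  have hcu : Fintype.card Fˣ = Fintype.card F - 1 := Fintype.card_units (α := F)
  have : 1 ≤ Fintype.card F := Fintype.card_pos
  simp only [smul_eq_mul]
  omega

end CNT

section CNT2
variable {F : Type} [Field F] [Fintype F] [DecidableEq F]

lemma pe_monic (e : Finset Fˣ) : (∏ u ∈ e, (X - C (u:F))).Monic :=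
  monic_prod_of_monic _ _ fun u _ => monic_X_sub_C _

lemma pe_natDegree (e : Finset Fˣ) : (∏ u ∈ e, (X - C (u:F))).natDegree = e.card := by
  rw [Polynomial.natDegree_prod _ _ (fun u _ => X_sub_C_ne_zero _)]
  simp [natDegree_X_sub_C]

lemma pe_eval (e : Finset Fˣ) (a : F) :
    (∏ u ∈ e, (X - C (u:F))).eval a = ∏ u ∈ e, (a - ↑u) := by
  simp [eval_prod]

lemma l_ne_zero {c d : F} (h : ¬(c = 0 ∧ d = 0)) : (C d + C c * X : F[X]) ≠ 0 := by
  intro h0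
  apply h
  constructor
  · have := congrArg (fun p : F[X] => p.coeff 1) h0
    simpa using this
  · have := congrArg (fun p : F[X] => p.coeff 0) h0
    simpa using this

lemma rootsU_theta (x : (Finset Fˣ) × F × F) (hx : x ∈ Param F) :
    rootsU (Theta x) = x.1 := by
  obtain ⟨e, c, d⟩ := x
  simp only [Param, mem_filter, Finset.mem_product, Finset.mem_powersetCard_univ] at hx
  obtain ⟨⟨he, -⟩, hcd⟩ := hx
  simp only [allowedCD, mem_filter, mem_univ, true_and] at hcd
  obtain ⟨hne, hall⟩ := hcd
  ext u
  simp only [rootsU, mem_filter, mem_univ, true_and, Theta, eval_mul, mul_eq_zero, pe_eval]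
  constructor
  · rintro (h | h)
    · obtain ⟨w, hw, hw2⟩ := Finset.prod_eq_zero_iff.1 h
      have : (u:F) = w := by linear_combination hw2
      rwa [show u = w from Units.ext this]
    · apply hall
      simp only [eval_add, eval_mul, eval_C, eval_X] at h
      linear_combination h
  · intro hu
    left
    exact Finset.prod_eq_zero hu (by simp)

lemma theta_natDegree (x : (Finset Fˣ) × F × F) (hx : x ∈ Param F) :
    (Theta x).natDegree ≤ 3 := by
  obtain ⟨e, c, d⟩ := x
  simp only [Param, mem_filter, Finset.mem_product, Finset.mem_powersetCard_univ] at hx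
  obtain ⟨⟨he, -⟩, hcd⟩ := hx
  simp only [allowedCD, mem_filter, mem_univ, true_and] at hcd
  obtain ⟨hne, -⟩ := hcd
  have h1 : (C d + C c * X : F[X]) ≠ 0 := l_ne_zero hne
  have h2 : (∏ u ∈ e, (X - C (u:F))) ≠ 0 := (pe_monic e).ne_zero
  rw [Theta, natDegree_mul h2 h1, pe_natDegree, he]
  have : (C d + C c * X : F[X]).natDegree ≤ 1 := by compute_degree
  omega

lemma theta_injOn : Set.InjOn Theta ((Param F : Finset _) : Set ((Finset Fˣ) × F × F)) := by
  intro x hx y hy hxy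
  simp only [Finset.coe_filter, Set.mem_setOf_eq, Finset.mem_coe] at hx hy
  have hx' : x ∈ Param F := hx
  have hy' : y ∈ Param F := hy
  have h1 : x.1 = y.1 := by
    rw [← rootsU_theta x hx', ← rootsU_theta y hy', hxy]
  have h2 : (C x.2.2 + C x.2.1 * X : F[X]) = C y.2.2 + C y.2.1 * X := by
    have hpe : (∏ u ∈ x.1, (X - C (u:F))) ≠ 0 := (pe_monic x.1).ne_zero
    apply mul_left_cancel₀ hpe
    have := hxy
    simp only [Theta] at this
    rw [this, h1]
  have hd : x.2.2 = y.2.2 := by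
    have := congrArg (fun p : F[X] => p.coeff 0) h2
    simpa using this
  have hc : x.2.1 = y.2.1 := by
    have := congrArg (fun p : F[X] => p.coeff 1) h2
    simpa using this
  exact Prod.ext h1 (Prod.ext hc hd)

lemma theta_surj (g : F[X]) (hdeg : g.natDegree ≤ 3) (hcard : (rootsU g).card = 2)
    (hq4 : 4 ≤ Fintype.card Fˣ) : ∃ x ∈ Param F, Theta x = g := by
  classical
  set e := rootsU g with he
  have hg0 : g ≠ 0 := by
    intro h0
    have huniv : rootsU (0 : F[X]) = univ := by ext u; simp [rootsU]
    have h2 := hcard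
    rw [he, h0, huniv, Finset.card_univ] at h2
    omega
  have hdvd : (∏ u ∈ e, (X - C (u:F))) ∣ g := by
    apply Finset.prod_dvd_of_coprime
    · intro u hu v hv huv
      simp only [Function.onFun]
      apply Polynomial.isCoprime_X_sub_C_of_isUnit_sub
      apply isUnit_iff_ne_zero.2
      intro h0
      apply huv
      exact Units.ext (by linear_combination h0)
    · intro u hu
      apply dvd_iff_isRoot.2
      simp only [he, rootsU, mem_filter] at hu
      exact hu.2
  obtain ⟨l, hl⟩ := hdvd
  have hl0 : l ≠ 0 := by
    intro h0; rw [h0, mul_zero] at hl; exact hg0 hl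
  have hldeg : l.natDegree ≤ 1 := by
    have := natDegree_mul (pe_monic e).ne_zero hl0
    rw [← hl, pe_natDegree, hcard] at this
    omega
  have hlrep : l = C (l.coeff 1) * X + C (l.coeff 0) :=
    eq_X_add_C_of_natDegree_le_one hldeg
  refine ⟨(e, l.coeff 1, l.coeff 0), ?_, ?_⟩
  · simp only [Param, mem_filter, Finset.mem_product, Finset.mem_powersetCard_univ,
      mem_univ, and_true, true_and]
    refine ⟨hcard, ?_⟩
    simp only [allowedCD, mem_filter, mem_univ, true_and]
    constructor
    · intro ⟨h1, h0⟩
      apply hl0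
      rw [hlrep, h1, h0]
      simp
    · intro u hu
      have hlu : l.eval ↑u = 0 := by
        rw [hlrep]
        simp only [eval_add, eval_mul, eval_C, eval_X]
        linear_combination hu
      have : g.eval ↑u = 0 := by
        rw [hl, eval_mul, hlu, mul_zero]
      simp only [he, rootsU, mem_filter, mem_univ, true_and]
      exact this
  · rw [Theta, hl]
    congr 1
    conv_rhs => rw [hlrep]
    ring

lemma card_Param (hq4 : 4 ≤ Fintype.card Fˣ) :
    (Param F).card = Nat.choose (Fintype.card Fˣ) 2 * (4 * Fintype.card Fˣ) := by
  classical
  rw [Finset.card_eq_sum_card_fiberwise (f := fun x => x.1) (t := univ.powersetCard 2)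
    (fun x hx => by
      simp only [Param, Finset.mem_coe, mem_filter, Finset.mem_product] at hx
      exact hx.1.1)]
  have key : ∀ e ∈ (univ : Finset Fˣ).powersetCard 2,
      ((Param F).filter fun x => x.1 = e).card = 4 * Fintype.card Fˣ := by
    intro e hee
    have he : e.card = 2 := (Finset.mem_powersetCard_univ).1 hee
    have himg : ((Param F).filter fun x => x.1 = e)
        = Finset.image (fun cd => (e, cd)) (allowedCD e) := by
      ext x
      simp only [Param, mem_filter, Finset.mem_product, Finset.mem_image, mem_univ, and_true,
        true_and]
      constructor
      · rintro ⟨⟨h1, h2⟩, h3⟩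
        exact ⟨x.2, h3 ▸ h2, by rw [← h3]⟩
      · rintro ⟨cd, hcd, rfl⟩
        exact ⟨⟨by rwa [Finset.mem_powersetCard_univ], hcd⟩, rfl⟩
    rw [himg, Finset.card_image_of_injective _ (fun a b hab => (Prod.ext_iff.1 hab).2),
      card_allowedCD e he]
  rw [Finset.sum_congr rfl key, Finset.sum_const, Finset.card_powersetCard, Finset.card_univ,
    smul_eq_mul]

lemma ncard_G (hq4 : 4 ≤ Fintype.card Fˣ) :
    Set.ncard {g : F[X] | g.natDegree ≤ 3 ∧ (rootsU g).card = 2}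
      = Nat.choose (Fintype.card Fˣ) 2 * (4 * Fintype.card Fˣ) := by
  classical
  have hset : {g : F[X] | g.natDegree ≤ 3 ∧ (rootsU g).card = 2}
      = Theta '' ((Param F : Finset _) : Set ((Finset Fˣ) × F × F)) := by
    ext g
    simp only [Set.mem_setOf_eq, Set.mem_image, Finset.mem_coe]
    constructor
    · rintro ⟨h1, h2⟩
      obtain ⟨x, hx, hxe⟩ := theta_surj g h1 h2 hq4
      exact ⟨x, hx, hxe⟩
    · rintro ⟨x, hx, rfl⟩
      refine ⟨theta_natDegree x hx, ?_⟩
      rw [rootsU_theta x hx]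
      exact (Finset.mem_powersetCard_univ).1 (by
        simp only [Param, mem_filter, Finset.mem_product] at hx
        exact hx.1.1)
  rw [hset, Set.ncard_image_of_injOn theta_injOn, Set.ncard_coe_finset, card_Param hq4]
end CNT2


/-- for every prime power `q ≥ 5`, the number of codewords of `C_{P₆⁽³⁾}`
over `𝔽_q` of Hamming weight exactly `(q-1)² − 2(q-1)` equals `4·C(q-1,2)·(q-1)`. -/
theorem codeword_count_P6_3 (q : ℕ) (hq : IsPrimePow q) (hq5 : 5 ≤ q)
    (F : Type) [Field F] [Fintype F] (hF : Fintype.card F = q) :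
    Set.ncard {c : (Fˣ × Fˣ) → F | c ∈ toricCode F (latticePts (P6 3)) ∧
        hammingWt c = (q - 1)^2 - 2 * (q - 1)}
      = 4 * Nat.choose (q - 1) 2 * (q - 1) := by
  classical
  letI : DecidableEq F := Classical.decEq F
  set n := Fintype.card Fˣ with hndef
  have hn : n = q - 1 := by
    rw [hndef, Fintype.card_units (α := F), hF]
  have hn4 : 4 ≤ n := by omega
  have hn2 : 2 * n ≤ n * n := by nlinarith
  have hsq : (q - 1)^2 - 2 * (q - 1) = n * n - 2 * n := by
    rw [hn, pow_two]
  have hcode : ∀ c : (Fˣ × Fˣ) → F, c ∈ toricCode F (latticePts (P6 3)) ↔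
      (∃ g h : F[X], g.natDegree ≤ 3 ∧ h.natDegree ≤ 1 ∧
        c = fun t => g.eval ↑t.1 + ↑t.2 * h.eval ↑t.1) := by
    intro c
    rw [toricCode, lattice_P63]
    exact span_char c
  have hwt : ∀ c : (Fˣ × Fˣ) → F, hammingWt c = wtF c := fun c => wtF_eq c
  have hcardprod : Fintype.card (Fˣ × Fˣ) = n * n := by
    rw [Fintype.card_prod, hndef]
  -- the set of codewords of the given weight is the image of the good polynomials
  have hset : {c : (Fˣ × Fˣ) → F | c ∈ toricCode F (latticePts (P6 3)) ∧
        hammingWt c = (q - 1)^2 - 2 * (q - 1)}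
      = (fun g : F[X] => fun t : Fˣ × Fˣ => g.eval ↑t.1) ''
        {g : F[X] | g.natDegree ≤ 3 ∧ (rootsU g).card = 2} := by
    ext c
    simp only [Set.mem_setOf_eq, Set.mem_image]
    constructor
    · rintro ⟨hc, hw⟩
      obtain ⟨g, h, hg3, hh1, rfl⟩ := (hcode _).1 hc
      rw [hwt, hsq] at hw
      by_cases hh0 : h = 0
      · subst hh0
        have heq : (fun t : Fˣ × Fˣ => g.eval ↑t.1 + ↑t.2 * Polynomial.eval (↑t.1) 0)
            = fun t : Fˣ × Fˣ => g.eval ↑t.1 := by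
          funext t; simp
        rw [heq] at hw ⊢
        refine ⟨g, ⟨hg3, ?_⟩, rfl⟩
        rw [wt_psi, ← hndef] at hw
        have hRle : (rootsU g).card ≤ n := by
          rw [hndef]
          exact le_trans (Finset.card_filter_le _ _) (le_of_eq (Finset.card_univ))
        have hmul : (n - (rootsU g).card) * n = n * n - (rootsU g).card * n := by
          rw [Nat.sub_mul]
        rw [hmul] at hw
        have hRn : (rootsU g).card * n = 2 * n := by
          have h1 : (rootsU g).card * n ≤ n * n := Nat.mul_le_mul_right n hRle
          omega
        have : (rootsU g).card = 2 := by
          have hnpos : 0 < n := by omega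
          exact Nat.eq_of_mul_eq_mul_right hnpos hRn
        exact this
      · exfalso
        set c := fun t : Fˣ × Fˣ => g.eval ↑t.1 + ↑t.2 * h.eval ↑t.1 with hc'
        have hZ := zeros_bound_s15 g h hh0 hh1
        rw [← hndef] at hZ
        have hsplit := Finset.card_filter_add_card_filter_not
          (s := (univ : Finset (Fˣ × Fˣ)))
          (p := fun t => g.eval ↑t.1 + ↑t.2 * h.eval ↑t.1 = 0)
        rw [Finset.card_univ, hcardprod] at hsplit
        have hwtc : wtF c = (univ.filter fun t : Fˣ × Fˣ =>
            ¬(g.eval ↑t.1 + ↑t.2 * h.eval ↑t.1 = 0)).card := by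
          rw [wtF]
        rw [hwtc] at hw
        omega
    · rintro ⟨g, ⟨hg3, hg2⟩, rfl⟩
      constructor
      · apply (hcode _).2
        refine ⟨g, 0, hg3, by simp, ?_⟩
        funext t; simp
      · rw [hwt, hsq, wt_psi, ← hndef, hg2, Nat.sub_mul]
  rw [hset]
  have hinj : Set.InjOn (fun g : F[X] => fun t : Fˣ × Fˣ => g.eval ↑t.1)
      {g : F[X] | g.natDegree ≤ 3 ∧ (rootsU g).card = 2} := by
    intro g1 hg1 g2 hg2 heq
    have hz : g1 - g2 = 0 := by
      apply Polynomial.eq_zero_of_natDegree_lt_card_of_eval_eq_zero (g1 - g2)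
        (f := fun u : Fˣ => (u : F)) (fun a b hab => Units.ext hab)
      · intro u
        have := congrFun heq (u, u)
        simp only at this
        rw [Polynomial.eval_sub, this, sub_self]
      · have h1 : (g1 - g2).natDegree ≤ 3 := by
          refine le_trans (Polynomial.natDegree_sub_le _ _) ?_
          exact max_le hg1.1 hg2.1
        omega
    exact sub_eq_zero.1 hz
  rw [Set.ncard_image_of_injOn hinj, ncard_G hn4, ← hndef, hn]
  ring
end
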